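/- arXiv:2206.02198 — 6 statements merged into one kernel-verified Lean document; each statement's English description precedes it below -/
import Mathlib

section
/- Let λ_1, λ_2, λ_3, λ_{12}, λ_{123'} ≥ 0 and suppose that at least one of the following holds: (a) λ_{12} + λ_{123'} ≥ log₂ ⌈2^{λ_{123'}}⌉, or (b) λ_{123'} = log₂ m for some positive integer m. Then λ_1·e_1 + λ_2·e_2 + λ_3·e_3 + λ_{12}·e_{12} + λ_{123'}·e_{123'} ∈ ℝ^7 is an entropy vector of three finite-alphabet random variables. -/
open Finset

/-- Probability that the discrete random variable `X` (on finite sample space `Fin N`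
with probability mass function `p`) takes the value `a`. -/
noncomputable def pr {N : ℕ} (p : Fin N → ℝ) {A : Type} [DecidableEq A]
    (X : Fin N → A) (a : A) : ℝ :=
  ∑ ω, if X ω = a then p ω else 0

/-- Base-2 Shannon entropy of the random variable `X` under the pmf `p`. -/
noncomputable def ent {N : ℕ} (p : Fin N → ℝ) {A : Type} [Fintype A] [DecidableEq A]
    (X : Fin N → A) : ℝ :=
  -∑ a, pr p X a * Real.logb 2 (pr p X a)

/-- `p` is a probability mass function. -/
def IsDist {N : ℕ} (p : Fin N → ℝ) : Prop :=
  (∀ ω, 0 ≤ p ω) ∧ ∑ ω, p ω = 1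

/-- The entropy vector of three finite-alphabet random variables, with components
(H(X₁), H(X₂), H(X₃), H(X₁X₂), H(X₁X₃), H(X₂X₃), H(X₁X₂X₃)). -/
noncomputable def entVec3 {N a₁ a₂ a₃ : ℕ} (p : Fin N → ℝ)
    (X₁ : Fin N → Fin a₁) (X₂ : Fin N → Fin a₂) (X₃ : Fin N → Fin a₃) : Fin 7 → ℝ :=
  ![ent p X₁, ent p X₂, ent p X₃,
    ent p (fun ω => (X₁ ω, X₂ ω)),
    ent p (fun ω => (X₁ ω, X₃ ω)),
    ent p (fun ω => (X₂ ω, X₃ ω)),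
    ent p (fun ω => (X₁ ω, X₂ ω, X₃ ω))]

/-- `h ∈ ℝ⁷` is the entropy vector of some triple of finite-alphabet random variables. -/
def IsEntropic (h : Fin 7 → ℝ) : Prop :=
  ∃ (N a₁ a₂ a₃ : ℕ) (p : Fin N → ℝ)
    (X₁ : Fin N → Fin a₁) (X₂ : Fin N → Fin a₂) (X₃ : Fin N → Fin a₃),
    IsDist p ∧ entVec3 p X₁ X₂ X₃ = h

noncomputable def e1 : Fin 7 → ℝ := ![1,0,0,1,1,0,1]
noncomputable def e2 : Fin 7 → ℝ := ![0,1,0,1,0,1,1]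
noncomputable def e3 : Fin 7 → ℝ := ![0,0,1,0,1,1,1]
noncomputable def e12 : Fin 7 → ℝ := ![1,1,0,1,1,1,1]
noncomputable def e13 : Fin 7 → ℝ := ![1,0,1,1,1,1,1]
noncomputable def e23 : Fin 7 → ℝ := ![0,1,1,1,1,1,1]
noncomputable def e123 : Fin 7 → ℝ := ![1,1,1,1,1,1,1]
noncomputable def e123' : Fin 7 → ℝ := ![1,1,1,2,2,2,2]


noncomputable def nml (x : ℝ) : ℝ := x * Real.logb 2 x

lemma nml_zero : nml 0 = 0 := by simp [nml]
lemma nml_one : nml 1 = 0 := by simp [nml]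

lemma nml_mul (x y : ℝ) : nml (x * y) = y * nml x + x * nml y := by
  rcases eq_or_ne x 0 with rfl | hx
  · simp [nml]
  rcases eq_or_ne y 0 with rfl | hy
  · simp [nml]
  simp only [nml, Real.logb, Real.log_mul hx hy]
  ring

noncomputable def prG {Ω A : Type} [Fintype Ω] [DecidableEq A] (p : Ω → ℝ)
    (X : Ω → A) (a : A) : ℝ :=
  ∑ ω, if X ω = a then p ω else 0

noncomputable def entG {Ω A : Type} [Fintype Ω] [Fintype A] [DecidableEq A]
    (p : Ω → ℝ) (X : Ω → A) : ℝ :=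
  -∑ a, nml (prG p X a)

lemma prG_id {A : Type} [Fintype A] [DecidableEq A] (p : A → ℝ) (a : A) :
    prG p id a = p a := by
  simp [prG, Finset.sum_ite_eq']

lemma entG_id {A : Type} [Fintype A] [DecidableEq A] (p : A → ℝ) :
    entG p id = -∑ a, nml (p a) := by
  unfold entG
  congr 1
  exact Finset.sum_congr rfl fun a _ => by rw [prG_id]

lemma sum_prG {Ω A : Type} [Fintype Ω] [Fintype A] [DecidableEq A] (p : Ω → ℝ) (X : Ω → A) :
    ∑ a, prG p X a = ∑ ω, p ω := by
  unfold prG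
  rw [Finset.sum_comm]
  exact Finset.sum_congr rfl fun ω _ => by simp [Finset.sum_ite_eq']

lemma sum_mul_prod {Ω₁ Ω₂ : Type} [Fintype Ω₁] [Fintype Ω₂] (p1 : Ω₁ → ℝ) (p2 : Ω₂ → ℝ) :
    ∑ ω : Ω₁ × Ω₂, p1 ω.1 * p2 ω.2 = (∑ x, p1 x) * (∑ y, p2 y) := by
  rw [Fintype.sum_prod_type, Finset.sum_mul_sum]

lemma entG_unit {Ω : Type} [Fintype Ω] (p : Ω → ℝ) :
    entG p (fun _ => ()) = -nml (∑ ω, p ω) := by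
  unfold entG prG
  simp

lemma prG_prod {Ω₁ Ω₂ A B : Type} [Fintype Ω₁] [Fintype Ω₂] [DecidableEq A] [DecidableEq B]
    (p1 : Ω₁ → ℝ) (p2 : Ω₂ → ℝ) (f1 : Ω₁ → A) (f2 : Ω₂ → B) (c : A × B) :
    prG (fun ω : Ω₁ × Ω₂ => p1 ω.1 * p2 ω.2) (fun ω => (f1 ω.1, f2 ω.2)) c
      = prG p1 f1 c.1 * prG p2 f2 c.2 := by
  unfold prG
  rw [Fintype.sum_prod_type, Finset.sum_mul_sum]
  apply Finset.sum_congr rfl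
  intro x _
  apply Finset.sum_congr rfl
  intro y _
  by_cases h1 : f1 x = c.1 <;> by_cases h2 : f2 y = c.2 <;>
    simp [h1, h2, Prod.ext_iff]

lemma entG_prod {Ω₁ Ω₂ A B : Type} [Fintype Ω₁] [Fintype Ω₂]
    [Fintype A] [DecidableEq A] [Fintype B] [DecidableEq B]
    (p1 : Ω₁ → ℝ) (p2 : Ω₂ → ℝ) (f1 : Ω₁ → A) (f2 : Ω₂ → B) :
    entG (fun ω : Ω₁ × Ω₂ => p1 ω.1 * p2 ω.2) (fun ω => (f1 ω.1, f2 ω.2))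
      = (∑ y, p2 y) * entG p1 f1 + (∑ x, p1 x) * entG p2 f2 := by
  unfold entG
  have h : ∀ c : A × B, prG (fun ω : Ω₁ × Ω₂ => p1 ω.1 * p2 ω.2) (fun ω => (f1 ω.1, f2 ω.2)) c
      = prG p1 f1 c.1 * prG p2 f2 c.2 := prG_prod p1 p2 f1 f2
  rw [Fintype.sum_prod_type]
  have h2 : ∀ a : A, ∀ b : B, nml (prG p1 f1 a * prG p2 f2 b)
      = prG p2 f2 b * nml (prG p1 f1 a) + prG p1 f1 a * nml (prG p2 f2 b) :=
    fun a b => nml_mul _ _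
  simp only [h, h2, Finset.sum_add_distrib, ← Finset.sum_mul, ← Finset.mul_sum, sum_prG]
  ring

lemma entG_comp_inj {Ω A B : Type} [Fintype Ω] [Fintype A] [DecidableEq A]
    [Fintype B] [DecidableEq B]
    (p : Ω → ℝ) (Y : Ω → A) (g : A → B) (hg : Function.Injective g) :
    entG p (fun ω => g (Y ω)) = entG p Y := by
  unfold entG
  congr 1
  have h1 : ∀ a, prG p (fun ω => g (Y ω)) (g a) = prG p Y a := by
    intro a
    unfold prG
    exact Finset.sum_congr rfl fun ω _ => by simp [hg.eq_iff]
  have hvan : ∀ b ∈ (Finset.univ : Finset B), b ∉ Finset.univ.image g →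
      nml (prG p (fun ω => g (Y ω)) b) = 0 := by
    intro b _ hb
    have : prG p (fun ω => g (Y ω)) b = 0 := by
      unfold prG
      apply Finset.sum_eq_zero
      intro ω _
      rw [if_neg]
      intro hc
      exact hb (Finset.mem_image.mpr ⟨Y ω, Finset.mem_univ _, hc⟩)
    rw [this, nml_zero]
  rw [← Finset.sum_subset (Finset.subset_univ (Finset.univ.image g)) hvan,
    Finset.sum_image (by intro x _ y _ h; exact hg h)]
  exact Finset.sum_congr rfl fun a _ => by rw [h1]

lemma entG_reindex {Ω Ω' A : Type} [Fintype Ω] [Fintype Ω'] [Fintype A] [DecidableEq A]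
    (e : Ω' ≃ Ω) (p : Ω → ℝ) (X : Ω → A) :
    entG (fun ω' => p (e ω')) (fun ω' => X (e ω')) = entG p X := by
  unfold entG
  congr 1
  apply Finset.sum_congr rfl
  intro a _
  congr 1
  exact Equiv.sum_comp e (fun ω => if X ω = a then p ω else 0)

lemma prG_sub {G : Type} [Fintype G] [DecidableEq G] [AddGroup G] (u : ℝ) (qc : G → ℝ) (b : G) :
    prG (fun z : G × G => u * qc z.2) (fun z => z.2 - z.1) b = u * ∑ c, qc c := by
  unfold prG
  rw [Fintype.sum_prod_type]
  have step : ∀ a : G, (∑ c, if c - a = b then u * qc c else 0) = u * qc (b + a) := by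
    intro a
    rw [Finset.sum_eq_single (b + a)]
    · rw [if_pos (add_sub_cancel_right b a)]
    · intro c _ hc
      rw [if_neg]
      intro h
      exact hc (sub_eq_iff_eq_add.mp h)
    · intro h; exact absurd (Finset.mem_univ _) h
  calc ∑ a, ∑ c, (if c - a = b then u * qc c else 0)
      = ∑ a, u * qc (b + a) := Finset.sum_congr rfl fun a _ => step a
    _ = ∑ c, u * qc c := Equiv.sum_comp (Equiv.addLeft b) (fun c => u * qc c)
    _ = u * ∑ c, qc c := (Finset.mul_sum _ _ _).symm

lemma neg_card_nml_inv (n : ℕ) (hn : 0 < n) : -((n : ℝ) * nml ((n : ℝ)⁻¹)) = Real.logb 2 n := by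
  have h0 : (n : ℝ) ≠ 0 := Nat.cast_ne_zero.mpr hn.ne'
  rw [nml, Real.logb_inv]
  field_simp


lemma ent_eq_entG {N : ℕ} {A : Type} [Fintype A] [DecidableEq A]
    (p : Fin N → ℝ) (X : Fin N → A) : ent p X = entG p X := rfl

lemma entG_five {A1 A2 A3 A4 A5 B1 B2 B3 B4 B5 : Type}
    [Fintype A1] [Fintype A2] [Fintype A3] [Fintype A4] [Fintype A5]
    [Fintype B1] [DecidableEq B1] [Fintype B2] [DecidableEq B2] [Fintype B3] [DecidableEq B3]
    [Fintype B4] [DecidableEq B4] [Fintype B5] [DecidableEq B5]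
    (p1 : A1 → ℝ) (p2 : A2 → ℝ) (p3 : A3 → ℝ) (p4 : A4 → ℝ) (p5 : A5 → ℝ)
    (f1 : A1 → B1) (f2 : A2 → B2) (f3 : A3 → B3) (f4 : A4 → B4) (f5 : A5 → B5)
    (hs1 : ∑ x, p1 x = 1) (hs2 : ∑ x, p2 x = 1) (hs3 : ∑ x, p3 x = 1)
    (hs4 : ∑ x, p4 x = 1) (hs5 : ∑ x, p5 x = 1) :
    entG (fun ω : A1 × (A2 × (A3 × (A4 × A5))) =>
        p1 ω.1 * (p2 ω.2.1 * (p3 ω.2.2.1 * (p4 ω.2.2.2.1 * p5 ω.2.2.2.2))))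
      (fun ω => (f1 ω.1, (f2 ω.2.1, (f3 ω.2.2.1, (f4 ω.2.2.2.1, f5 ω.2.2.2.2))))) =
      entG p1 f1 + entG p2 f2 + entG p3 f3 + entG p4 f4 + entG p5 f5 := by
  have s45 : ∑ z : A4 × A5, p4 z.1 * p5 z.2 = 1 := by
    rw [sum_mul_prod, hs4, hs5, mul_one]
  have s345 : ∑ z : A3 × (A4 × A5), p3 z.1 * (p4 z.2.1 * p5 z.2.2) = 1 := by
    have h : ∑ z : A3 × (A4 × A5), p3 z.1 * (p4 z.2.1 * p5 z.2.2)
        = (∑ x, p3 x) * (∑ z : A4 × A5, p4 z.1 * p5 z.2) :=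
      sum_mul_prod p3 (fun z : A4 × A5 => p4 z.1 * p5 z.2)
    rw [h, hs3, s45, mul_one]
  have s2345 : ∑ z : A2 × (A3 × (A4 × A5)), p2 z.1 * (p3 z.2.1 * (p4 z.2.2.1 * p5 z.2.2.2)) = 1 := by
    have h : ∑ z : A2 × (A3 × (A4 × A5)), p2 z.1 * (p3 z.2.1 * (p4 z.2.2.1 * p5 z.2.2.2))
        = (∑ x, p2 x) * (∑ z : A3 × (A4 × A5), p3 z.1 * (p4 z.2.1 * p5 z.2.2)) :=
      sum_mul_prod p2 (fun z : A3 × (A4 × A5) => p3 z.1 * (p4 z.2.1 * p5 z.2.2))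
    rw [h, hs2, s345, mul_one]
  have e45 : entG (fun z : A4 × A5 => p4 z.1 * p5 z.2) (fun z => (f4 z.1, f5 z.2))
      = entG p4 f4 + entG p5 f5 := by
    have h := entG_prod p4 p5 f4 f5
    rw [hs4, hs5, one_mul, one_mul] at h
    exact h
  have e345 : entG (fun z : A3 × (A4 × A5) => p3 z.1 * (p4 z.2.1 * p5 z.2.2))
      (fun z => (f3 z.1, (f4 z.2.1, f5 z.2.2)))
      = entG p3 f3 + (entG p4 f4 + entG p5 f5) := by
    have h : entG (fun z : A3 × (A4 × A5) => p3 z.1 * (p4 z.2.1 * p5 z.2.2))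
        (fun z => (f3 z.1, (f4 z.2.1, f5 z.2.2)))
        = (∑ z : A4 × A5, p4 z.1 * p5 z.2) * entG p3 f3
          + (∑ x, p3 x) * entG (fun z : A4 × A5 => p4 z.1 * p5 z.2) (fun z => (f4 z.1, f5 z.2)) :=
      entG_prod p3 (fun z : A4 × A5 => p4 z.1 * p5 z.2) f3 (fun z : A4 × A5 => (f4 z.1, f5 z.2))
    rw [h, s45, hs3, one_mul, one_mul, e45]
  have e2345 : entG (fun z : A2 × (A3 × (A4 × A5)) => p2 z.1 * (p3 z.2.1 * (p4 z.2.2.1 * p5 z.2.2.2)))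
      (fun z => (f2 z.1, (f3 z.2.1, (f4 z.2.2.1, f5 z.2.2.2))))
      = entG p2 f2 + (entG p3 f3 + (entG p4 f4 + entG p5 f5)) := by
    have h : entG (fun z : A2 × (A3 × (A4 × A5)) => p2 z.1 * (p3 z.2.1 * (p4 z.2.2.1 * p5 z.2.2.2)))
        (fun z => (f2 z.1, (f3 z.2.1, (f4 z.2.2.1, f5 z.2.2.2))))
        = (∑ z : A3 × (A4 × A5), p3 z.1 * (p4 z.2.1 * p5 z.2.2)) * entG p2 f2
          + (∑ x, p2 x) * entG (fun z : A3 × (A4 × A5) => p3 z.1 * (p4 z.2.1 * p5 z.2.2))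
              (fun z => (f3 z.1, (f4 z.2.1, f5 z.2.2))) :=
      entG_prod p2 (fun z : A3 × (A4 × A5) => p3 z.1 * (p4 z.2.1 * p5 z.2.2)) f2
        (fun z : A3 × (A4 × A5) => (f3 z.1, (f4 z.2.1, f5 z.2.2)))
    rw [h, s345, hs2, one_mul, one_mul, e345]
  have hfin : entG (fun ω : A1 × (A2 × (A3 × (A4 × A5))) =>
        p1 ω.1 * (p2 ω.2.1 * (p3 ω.2.2.1 * (p4 ω.2.2.2.1 * p5 ω.2.2.2.2))))
      (fun ω => (f1 ω.1, (f2 ω.2.1, (f3 ω.2.2.1, (f4 ω.2.2.2.1, f5 ω.2.2.2.2)))))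
      = (∑ z : A2 × (A3 × (A4 × A5)), p2 z.1 * (p3 z.2.1 * (p4 z.2.2.1 * p5 z.2.2.2))) * entG p1 f1
        + (∑ x, p1 x) * entG (fun z : A2 × (A3 × (A4 × A5)) => p2 z.1 * (p3 z.2.1 * (p4 z.2.2.1 * p5 z.2.2.2)))
            (fun z => (f2 z.1, (f3 z.2.1, (f4 z.2.2.1, f5 z.2.2.2)))) :=
    entG_prod p1 (fun z : A2 × (A3 × (A4 × A5)) => p2 z.1 * (p3 z.2.1 * (p4 z.2.2.1 * p5 z.2.2.2))) f1
      (fun z : A2 × (A3 × (A4 × A5)) => (f2 z.1, (f3 z.2.1, (f4 z.2.2.1, f5 z.2.2.2))))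
  rw [hfin, s2345, hs1, one_mul, one_mul, e2345]
  ring

lemma exists_dist {A : Type} [Fintype A] [DecidableEq A] [Nonempty A] {lam : ℝ}
    (h0 : 0 ≤ lam) (h1 : lam ≤ Real.logb 2 (Fintype.card A : ℝ)) :
    ∃ q : A → ℝ, (∀ a, 0 ≤ q a) ∧ (∑ a, q a = 1) ∧ (-∑ a, nml (q a) = lam) := by
  classical
  obtain ⟨a0⟩ := ‹Nonempty A›
  have hNpos : 0 < Fintype.card A := Fintype.card_pos
  have hN0 : ((Fintype.card A : ℕ) : ℝ) ≠ 0 := Nat.cast_ne_zero.mpr hNpos.ne'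
  set H : ℝ → ℝ := fun t =>
    -∑ a, nml ((1 - t) * (if a = a0 then 1 else 0) + t / (Fintype.card A : ℝ)) with hH
  have hnml : Continuous nml := by
    have h : (nml : ℝ → ℝ) = fun x => (x * Real.log x) * (Real.log 2)⁻¹ := by
      funext x
      simp only [nml, Real.logb, div_eq_mul_inv]
      ring
    rw [h]
    exact Real.continuous_mul_log.mul continuous_const
  have hHcont : Continuous H := by
    rw [hH]
    apply Continuous.neg
    apply continuous_finset_sum
    intro a _
    exact hnml.comp (((continuous_const.sub continuous_id).mul continuous_const).add
      (continuous_id.div_const _))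
  have hH0 : H 0 = 0 := by
    rw [hH]
    simp [apply_ite nml, nml_one, nml_zero]
  have hH1 : H 1 = Real.logb 2 (Fintype.card A : ℝ) := by
    rw [hH]
    simp only [sub_self, zero_mul, zero_add, one_div]
    rw [Finset.sum_const, Finset.card_univ, nsmul_eq_mul]
    exact neg_card_nml_inv _ hNpos
  have hsub := intermediate_value_Icc (zero_le_one (α := ℝ)) hHcont.continuousOn
  have hmem : lam ∈ Set.Icc (H 0) (H 1) := by
    rw [hH0, hH1]
    exact ⟨h0, h1⟩
  obtain ⟨t, hts, htH⟩ := hsub hmem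
  refine ⟨fun a => (1 - t) * (if a = a0 then 1 else 0) + t / (Fintype.card A : ℝ), ?_, ?_, ?_⟩
  · intro a
    have h1t : 0 ≤ 1 - t := by linarith [hts.2]
    have ht : 0 ≤ t := hts.1
    apply add_nonneg
    · apply mul_nonneg h1t
      split <;> norm_num
    · positivity
  · rw [Finset.sum_add_distrib, ← Finset.mul_sum]
    rw [Finset.sum_ite_eq' Finset.univ a0 (fun _ => (1 : ℝ))]
    simp only [Finset.mem_univ, if_pos, mul_one]
    rw [Finset.sum_const, Finset.card_univ, nsmul_eq_mul]
    field_simp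
    ring
  · exact htH

lemma ceil_spec {x : ℝ} (hx : 0 ≤ x) :
    0 < (⌈(2:ℝ) ^ x⌉).toNat ∧ x ≤ Real.logb 2 (((⌈(2:ℝ) ^ x⌉).toNat : ℕ) : ℝ) := by
  have hp : (0:ℝ) < 2 ^ x := Real.rpow_pos_of_pos two_pos x
  have h1 : (1:ℝ) ≤ 2 ^ x := by
    calc (1:ℝ) = 2 ^ (0:ℝ) := (Real.rpow_zero 2).symm
    _ ≤ 2 ^ x := Real.rpow_le_rpow_of_exponent_le one_le_two hx
  have hc : 0 < ⌈(2:ℝ) ^ x⌉ := Int.ceil_pos.mpr hp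
  have hcn : (((⌈(2:ℝ) ^ x⌉).toNat : ℕ) : ℝ) = ((⌈(2:ℝ) ^ x⌉ : ℤ) : ℝ) := by
    exact_mod_cast congrArg (fun z : ℤ => (z : ℝ)) (Int.toNat_of_nonneg hc.le)
  constructor
  · omega
  · have hle : (2:ℝ) ^ x ≤ ((⌈(2:ℝ) ^ x⌉ : ℤ) : ℝ) := Int.le_ceil _
    rw [hcn]
    calc x = Real.logb 2 ((2:ℝ) ^ x) := (Real.logb_rpow (by norm_num) (by norm_num)).symm
    _ ≤ _ := Real.logb_le_logb_of_le one_lt_two hp hle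

lemma isEntropic_of {Ω A1 A2 A3 : Type} [Fintype Ω] [Fintype A1] [DecidableEq A1]
    [Fintype A2] [DecidableEq A2] [Fintype A3] [DecidableEq A3]
    (p : Ω → ℝ) (X1 : Ω → A1) (X2 : Ω → A2) (X3 : Ω → A3)
    (hp0 : ∀ ω, 0 ≤ p ω) (hp1 : ∑ ω, p ω = 1) :
    IsEntropic ![entG p X1, entG p X2, entG p X3,
      entG p (fun ω => (X1 ω, X2 ω)), entG p (fun ω => (X1 ω, X3 ω)),
      entG p (fun ω => (X2 ω, X3 ω)), entG p (fun ω => (X1 ω, X2 ω, X3 ω))] := by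
  classical
  let e := (Fintype.equivFin Ω).symm
  let ee1 := Fintype.equivFin A1
  let ee2 := Fintype.equivFin A2
  let ee3 := Fintype.equivFin A3
  refine ⟨Fintype.card Ω, Fintype.card A1, Fintype.card A2, Fintype.card A3,
    fun i => p (e i), fun i => ee1 (X1 (e i)), fun i => ee2 (X2 (e i)), fun i => ee3 (X3 (e i)),
    ⟨fun i => hp0 _, (Equiv.sum_comp e p).trans hp1⟩, ?_⟩
  have t1 : ent (fun i => p (e i)) (fun i => ee1 (X1 (e i))) = entG p X1 := by
    rw [ent_eq_entG]
    have r : entG (fun i => p (e i)) (fun i => ee1 (X1 (e i)))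
        = entG p (fun ω => ee1 (X1 ω)) := entG_reindex e p (fun ω => ee1 (X1 ω))
    rw [r]
    exact entG_comp_inj p X1 ee1 ee1.injective
  have t2 : ent (fun i => p (e i)) (fun i => ee2 (X2 (e i))) = entG p X2 := by
    rw [ent_eq_entG]
    have r : entG (fun i => p (e i)) (fun i => ee2 (X2 (e i)))
        = entG p (fun ω => ee2 (X2 ω)) := entG_reindex e p (fun ω => ee2 (X2 ω))
    rw [r]
    exact entG_comp_inj p X2 ee2 ee2.injective
  have t3 : ent (fun i => p (e i)) (fun i => ee3 (X3 (e i))) = entG p X3 := by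
    rw [ent_eq_entG]
    have r : entG (fun i => p (e i)) (fun i => ee3 (X3 (e i)))
        = entG p (fun ω => ee3 (X3 ω)) := entG_reindex e p (fun ω => ee3 (X3 ω))
    rw [r]
    exact entG_comp_inj p X3 ee3 ee3.injective
  have t12 : ent (fun i => p (e i)) (fun i => (ee1 (X1 (e i)), ee2 (X2 (e i))))
      = entG p (fun ω => (X1 ω, X2 ω)) := by
    rw [ent_eq_entG]
    have r : entG (fun i => p (e i)) (fun i => (ee1 (X1 (e i)), ee2 (X2 (e i))))
        = entG p (fun ω => (ee1 (X1 ω), ee2 (X2 ω))) :=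
      entG_reindex e p (fun ω => (ee1 (X1 ω), ee2 (X2 ω)))
    rw [r]
    refine entG_comp_inj p (fun ω => (X1 ω, X2 ω)) (fun c => (ee1 c.1, ee2 c.2)) ?_
    rintro ⟨x1, x2⟩ ⟨y1, y2⟩ h
    simp only [Prod.mk.injEq] at h ⊢
    exact ⟨ee1.injective h.1, ee2.injective h.2⟩
  have t13 : ent (fun i => p (e i)) (fun i => (ee1 (X1 (e i)), ee3 (X3 (e i))))
      = entG p (fun ω => (X1 ω, X3 ω)) := by
    rw [ent_eq_entG]
    have r : entG (fun i => p (e i)) (fun i => (ee1 (X1 (e i)), ee3 (X3 (e i))))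
        = entG p (fun ω => (ee1 (X1 ω), ee3 (X3 ω))) :=
      entG_reindex e p (fun ω => (ee1 (X1 ω), ee3 (X3 ω)))
    rw [r]
    refine entG_comp_inj p (fun ω => (X1 ω, X3 ω)) (fun c => (ee1 c.1, ee3 c.2)) ?_
    rintro ⟨x1, x2⟩ ⟨y1, y2⟩ h
    simp only [Prod.mk.injEq] at h ⊢
    exact ⟨ee1.injective h.1, ee3.injective h.2⟩
  have t23 : ent (fun i => p (e i)) (fun i => (ee2 (X2 (e i)), ee3 (X3 (e i))))
      = entG p (fun ω => (X2 ω, X3 ω)) := by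
    rw [ent_eq_entG]
    have r : entG (fun i => p (e i)) (fun i => (ee2 (X2 (e i)), ee3 (X3 (e i))))
        = entG p (fun ω => (ee2 (X2 ω), ee3 (X3 ω))) :=
      entG_reindex e p (fun ω => (ee2 (X2 ω), ee3 (X3 ω)))
    rw [r]
    refine entG_comp_inj p (fun ω => (X2 ω, X3 ω)) (fun c => (ee2 c.1, ee3 c.2)) ?_
    rintro ⟨x1, x2⟩ ⟨y1, y2⟩ h
    simp only [Prod.mk.injEq] at h ⊢
    exact ⟨ee2.injective h.1, ee3.injective h.2⟩
  have t123 : ent (fun i => p (e i)) (fun i => (ee1 (X1 (e i)), ee2 (X2 (e i)), ee3 (X3 (e i))))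
      = entG p (fun ω => (X1 ω, X2 ω, X3 ω)) := by
    rw [ent_eq_entG]
    have r : entG (fun i => p (e i)) (fun i => (ee1 (X1 (e i)), ee2 (X2 (e i)), ee3 (X3 (e i))))
        = entG p (fun ω => (ee1 (X1 ω), ee2 (X2 ω), ee3 (X3 ω))) :=
      entG_reindex e p (fun ω => (ee1 (X1 ω), ee2 (X2 ω), ee3 (X3 ω)))
    rw [r]
    refine entG_comp_inj p (fun ω => (X1 ω, X2 ω, X3 ω))
      (fun c => (ee1 c.1, ee2 c.2.1, ee3 c.2.2)) ?_
    rintro ⟨x1, x2, x3⟩ ⟨y1, y2, y3⟩ h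
    simp only [Prod.mk.injEq] at h ⊢
    exact ⟨ee1.injective h.1, ee2.injective h.2.1, ee3.injective h.2.2⟩
  funext i
  fin_cases i <;> simp only [entVec3, Matrix.cons_val_zero, Matrix.cons_val_one,
    Matrix.head_cons, Matrix.cons_val_two, Matrix.tail_cons, Matrix.cons_val_three,
    Matrix.cons_val_four, Fin.isValue]
  · exact t1
  · exact t2
  · exact t3
  · exact t12
  · exact t13
  · exact t23
  · exact t123

lemma isEntropic_construction (n1 n2 n3 nw n : ℕ)
    [NeZero n1] [NeZero n2] [NeZero n3] [NeZero nw] [NeZero n]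
    (q1 : ZMod n1 → ℝ) (q2 : ZMod n2 → ℝ) (q3 : ZMod n3 → ℝ)
    (qw : ZMod nw → ℝ) (qc : ZMod n → ℝ)
    (hq1n : ∀ a, 0 ≤ q1 a) (hq1s : ∑ a, q1 a = 1)
    (hq2n : ∀ a, 0 ≤ q2 a) (hq2s : ∑ a, q2 a = 1)
    (hq3n : ∀ a, 0 ≤ q3 a) (hq3s : ∑ a, q3 a = 1)
    (hqwn : ∀ a, 0 ≤ qw a) (hqws : ∑ a, qw a = 1)
    (hqcn : ∀ a, 0 ≤ qc a) (hqcs : ∑ a, qc a = 1) :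
    IsEntropic ![(-∑ a, nml (q1 a)) + (-∑ a, nml (qw a)) + Real.logb 2 (n : ℝ),
      (-∑ a, nml (q2 a)) + (-∑ a, nml (qw a)) + Real.logb 2 (n : ℝ),
      (-∑ a, nml (q3 a)) + (-∑ a, nml (qc a)),
      (-∑ a, nml (q1 a)) + (-∑ a, nml (q2 a)) + (-∑ a, nml (qw a)) + Real.logb 2 (n : ℝ) + (-∑ a, nml (qc a)),
      (-∑ a, nml (q1 a)) + (-∑ a, nml (q3 a)) + (-∑ a, nml (qw a)) + Real.logb 2 (n : ℝ) + (-∑ a, nml (qc a)),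
      (-∑ a, nml (q2 a)) + (-∑ a, nml (q3 a)) + (-∑ a, nml (qw a)) + Real.logb 2 (n : ℝ) + (-∑ a, nml (qc a)),
      (-∑ a, nml (q1 a)) + (-∑ a, nml (q2 a)) + (-∑ a, nml (q3 a)) + (-∑ a, nml (qw a)) + Real.logb 2 (n : ℝ) + (-∑ a, nml (qc a))] := by
  classical
  have hn : 0 < n := Nat.pos_of_ne_zero (NeZero.ne n)
  have hn0 : (n : ℝ) ≠ 0 := Nat.cast_ne_zero.mpr hn.ne'
  have hconst : ∑ _x : ZMod n, (n : ℝ)⁻¹ = 1 := by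
    rw [Finset.sum_const, Finset.card_univ, ZMod.card, nsmul_eq_mul, mul_inv_cancel₀ hn0]
  have eConst : entG (fun _ : ZMod n => (n : ℝ)⁻¹) id = Real.logb 2 (n : ℝ) := by
    rw [entG_id]
    rw [Finset.sum_const, Finset.card_univ, ZMod.card, nsmul_eq_mul]
    exact neg_card_nml_inv n hn
  have hpAs : ∑ z : ZMod n × ZMod n, (n : ℝ)⁻¹ * qc z.2 = 1 := by
    have h : ∑ z : ZMod n × ZMod n, (n : ℝ)⁻¹ * qc z.2
        = (∑ _x : ZMod n, (n : ℝ)⁻¹) * (∑ y, qc y) :=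
      sum_mul_prod (fun _ : ZMod n => (n : ℝ)⁻¹) qc
    rw [h, hqcs, hconst, mul_one]
  have eP : entG (fun z : ZMod n × ZMod n => (n : ℝ)⁻¹ * qc z.2) (fun z : ZMod n × ZMod n => (z.1, z.2))
      = Real.logb 2 (n : ℝ) + (-∑ a, nml (qc a)) := by
    have h : entG (fun z : ZMod n × ZMod n => (n : ℝ)⁻¹ * qc z.2) (fun z : ZMod n × ZMod n => (z.1, z.2))
        = (∑ y, qc y) * entG (fun _ : ZMod n => (n : ℝ)⁻¹) id
          + (∑ _x : ZMod n, (n : ℝ)⁻¹) * entG qc id :=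
      entG_prod (fun _ : ZMod n => (n : ℝ)⁻¹) qc id id
    rw [h, hqcs, hconst, one_mul, one_mul, eConst, entG_id]
  have ePa : entG (fun z : ZMod n × ZMod n => (n : ℝ)⁻¹ * qc z.2) (fun z : ZMod n × ZMod n => z.1) = Real.logb 2 (n : ℝ) := by
    have hg : Function.Injective (fun w : ZMod n × Unit => w.1) := by
      rintro ⟨x, ⟨⟩⟩ ⟨y, ⟨⟩⟩ h
      simpa using h
    have s1 : entG (fun z : ZMod n × ZMod n => (n : ℝ)⁻¹ * qc z.2) (fun z : ZMod n × ZMod n => z.1)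
        = entG (fun z : ZMod n × ZMod n => (n : ℝ)⁻¹ * qc z.2) (fun z : ZMod n × ZMod n => (z.1, ())) :=
      entG_comp_inj (fun z : ZMod n × ZMod n => (n : ℝ)⁻¹ * qc z.2) (fun z : ZMod n × ZMod n => (z.1, ())) (fun w : ZMod n × Unit => w.1) hg
    have h : entG (fun z : ZMod n × ZMod n => (n : ℝ)⁻¹ * qc z.2) (fun z : ZMod n × ZMod n => (z.1, ()))
        = (∑ y, qc y) * entG (fun _ : ZMod n => (n : ℝ)⁻¹) id
          + (∑ _x : ZMod n, (n : ℝ)⁻¹) * entG qc (fun _ => ()) :=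
      entG_prod (fun _ : ZMod n => (n : ℝ)⁻¹) qc id (fun _ => ())
    rw [s1, h, hqcs, hconst, one_mul, one_mul, eConst, entG_unit, hqcs, nml_one, neg_zero, add_zero]
  have ePc : entG (fun z : ZMod n × ZMod n => (n : ℝ)⁻¹ * qc z.2) (fun z : ZMod n × ZMod n => z.2) = -∑ a, nml (qc a) := by
    have hg : Function.Injective (fun w : Unit × ZMod n => w.2) := by
      rintro ⟨⟨⟩, x⟩ ⟨⟨⟩, y⟩ h
      simpa using h
    have s1 : entG (fun z : ZMod n × ZMod n => (n : ℝ)⁻¹ * qc z.2) (fun z : ZMod n × ZMod n => z.2)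
        = entG (fun z : ZMod n × ZMod n => (n : ℝ)⁻¹ * qc z.2) (fun z : ZMod n × ZMod n => ((), z.2)) :=
      entG_comp_inj (fun z : ZMod n × ZMod n => (n : ℝ)⁻¹ * qc z.2) (fun z : ZMod n × ZMod n => ((), z.2)) (fun w : Unit × ZMod n => w.2) hg
    have h : entG (fun z : ZMod n × ZMod n => (n : ℝ)⁻¹ * qc z.2) (fun z : ZMod n × ZMod n => ((), z.2))
        = (∑ y, qc y) * entG (fun _ : ZMod n => (n : ℝ)⁻¹) (fun _ => ())
          + (∑ _x : ZMod n, (n : ℝ)⁻¹) * entG qc id :=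
      entG_prod (fun _ : ZMod n => (n : ℝ)⁻¹) qc (fun _ => ()) id
    rw [s1, h, hqcs, hconst, one_mul, one_mul, entG_unit, hconst, nml_one, neg_zero, zero_add, entG_id]
  have ePsub : entG (fun z : ZMod n × ZMod n => (n : ℝ)⁻¹ * qc z.2) (fun z : ZMod n × ZMod n => z.2 - z.1) = Real.logb 2 (n : ℝ) := by
    unfold entG
    have h : ∀ b, prG (fun z : ZMod n × ZMod n => (n : ℝ)⁻¹ * qc z.2) (fun z : ZMod n × ZMod n => z.2 - z.1) b = (n : ℝ)⁻¹ * ∑ c, qc c :=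
      fun b => prG_sub _ _ b
    simp only [h, hqcs, mul_one]
    rw [Finset.sum_const, Finset.card_univ, ZMod.card, nsmul_eq_mul]
    exact neg_card_nml_inv n hn
  have hp0 : ∀ ω : ZMod n1 × (ZMod n2 × (ZMod n3 × (ZMod nw × (ZMod n × ZMod n)))),
      0 ≤ q1 ω.1 * (q2 ω.2.1 * (q3 ω.2.2.1 * (qw ω.2.2.2.1 * ((n : ℝ)⁻¹ * qc ω.2.2.2.2.2)))) :=
    fun ω => mul_nonneg (hq1n _) (mul_nonneg (hq2n _) (mul_nonneg (hq3n _)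
      (mul_nonneg (hqwn _) (mul_nonneg (inv_nonneg.mpr (Nat.cast_nonneg n)) (hqcn _)))))
  have s4 : ∑ z : ZMod nw × (ZMod n × ZMod n), qw z.1 * ((n : ℝ)⁻¹ * qc z.2.2) = 1 := by
    have h : ∑ z : ZMod nw × (ZMod n × ZMod n), qw z.1 * ((n : ℝ)⁻¹ * qc z.2.2)
        = (∑ x, qw x) * (∑ z : ZMod n × ZMod n, (n : ℝ)⁻¹ * qc z.2) :=
      sum_mul_prod qw (fun z : ZMod n × ZMod n => (n : ℝ)⁻¹ * qc z.2)
    rw [h, hqws, hpAs, mul_one]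
  have s3 : ∑ z : ZMod n3 × (ZMod nw × (ZMod n × ZMod n)),
      q3 z.1 * (qw z.2.1 * ((n : ℝ)⁻¹ * qc z.2.2.2)) = 1 := by
    have h : ∑ z : ZMod n3 × (ZMod nw × (ZMod n × ZMod n)),
        q3 z.1 * (qw z.2.1 * ((n : ℝ)⁻¹ * qc z.2.2.2))
        = (∑ x, q3 x) * (∑ z : ZMod nw × (ZMod n × ZMod n), qw z.1 * ((n : ℝ)⁻¹ * qc z.2.2)) :=
      sum_mul_prod q3 (fun z : ZMod nw × (ZMod n × ZMod n) => qw z.1 * ((n : ℝ)⁻¹ * qc z.2.2))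
    rw [h, hq3s, s4, mul_one]
  have s2 : ∑ z : ZMod n2 × (ZMod n3 × (ZMod nw × (ZMod n × ZMod n))),
      q2 z.1 * (q3 z.2.1 * (qw z.2.2.1 * ((n : ℝ)⁻¹ * qc z.2.2.2.2))) = 1 := by
    have h : ∑ z : ZMod n2 × (ZMod n3 × (ZMod nw × (ZMod n × ZMod n))),
        q2 z.1 * (q3 z.2.1 * (qw z.2.2.1 * ((n : ℝ)⁻¹ * qc z.2.2.2.2)))
        = (∑ x, q2 x) * (∑ z : ZMod n3 × (ZMod nw × (ZMod n × ZMod n)),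
            q3 z.1 * (qw z.2.1 * ((n : ℝ)⁻¹ * qc z.2.2.2))) :=
      sum_mul_prod q2 (fun z : ZMod n3 × (ZMod nw × (ZMod n × ZMod n)) =>
        q3 z.1 * (qw z.2.1 * ((n : ℝ)⁻¹ * qc z.2.2.2)))
    rw [h, hq2s, s3, mul_one]
  have hp1 : ∑ ω : ZMod n1 × (ZMod n2 × (ZMod n3 × (ZMod nw × (ZMod n × ZMod n)))),
      q1 ω.1 * (q2 ω.2.1 * (q3 ω.2.2.1 * (qw ω.2.2.2.1 * ((n : ℝ)⁻¹ * qc ω.2.2.2.2.2)))) = 1 := by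
    have h : ∑ ω : ZMod n1 × (ZMod n2 × (ZMod n3 × (ZMod nw × (ZMod n × ZMod n)))),
        q1 ω.1 * (q2 ω.2.1 * (q3 ω.2.2.1 * (qw ω.2.2.2.1 * ((n : ℝ)⁻¹ * qc ω.2.2.2.2.2))))
        = (∑ x, q1 x) * (∑ z : ZMod n2 × (ZMod n3 × (ZMod nw × (ZMod n × ZMod n))),
            q2 z.1 * (q3 z.2.1 * (qw z.2.2.1 * ((n : ℝ)⁻¹ * qc z.2.2.2.2)))) :=
      sum_mul_prod q1 (fun z : ZMod n2 × (ZMod n3 × (ZMod nw × (ZMod n × ZMod n))) =>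
        q2 z.1 * (q3 z.2.1 * (qw z.2.2.1 * ((n : ℝ)⁻¹ * qc z.2.2.2.2))))
    rw [h, hq1s, s2, mul_one]
  have key := isEntropic_of (fun ω : ZMod n1 × (ZMod n2 × (ZMod n3 × (ZMod nw × (ZMod n × ZMod n)))) => q1 ω.1 * (q2 ω.2.1 * (q3 ω.2.2.1 * (qw ω.2.2.2.1 * ((n : ℝ)⁻¹ * qc ω.2.2.2.2.2)))))
    (fun ω => (ω.1, ω.2.2.2.1, ω.2.2.2.2.1))
    (fun ω => (ω.2.1, ω.2.2.2.1, ω.2.2.2.2.2 - ω.2.2.2.2.1))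
    (fun ω => (ω.2.2.1, ω.2.2.2.2.2))
    hp0 hp1
  have c0 : entG (fun ω : ZMod n1 × (ZMod n2 × (ZMod n3 × (ZMod nw × (ZMod n × ZMod n)))) => q1 ω.1 * (q2 ω.2.1 * (q3 ω.2.2.1 * (qw ω.2.2.2.1 * ((n : ℝ)⁻¹ * qc ω.2.2.2.2.2)))))
      (fun ω => (ω.1, ω.2.2.2.1, ω.2.2.2.2.1))
      = (-∑ a, nml (q1 a)) + (-∑ a, nml (qw a)) + Real.logb 2 (n : ℝ) := by
    have hg : Function.Injective (fun z : ZMod n1 × (Unit × (Unit × (ZMod nw × (ZMod n)))) => (z.1, z.2.2.2.1, z.2.2.2.2)) := by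
      rintro ⟨a1, ⟨⟩, ⟨⟩, a4, a5⟩ ⟨b1, ⟨⟩, ⟨⟩, b4, b5⟩ h
      simp only [Prod.mk.injEq] at h
      obtain ⟨h1, h4, h5⟩ := h
      subst h1; subst h4; subst h5
      rfl
    have step1 : entG (fun ω : ZMod n1 × (ZMod n2 × (ZMod n3 × (ZMod nw × (ZMod n × ZMod n)))) => q1 ω.1 * (q2 ω.2.1 * (q3 ω.2.2.1 * (qw ω.2.2.2.1 * ((n : ℝ)⁻¹ * qc ω.2.2.2.2.2)))))
        (fun ω => (ω.1, ω.2.2.2.1, ω.2.2.2.2.1))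
        = entG (fun ω : ZMod n1 × (ZMod n2 × (ZMod n3 × (ZMod nw × (ZMod n × ZMod n)))) => q1 ω.1 * (q2 ω.2.1 * (q3 ω.2.2.1 * (qw ω.2.2.2.1 * ((n : ℝ)⁻¹ * qc ω.2.2.2.2.2)))))
        (fun ω => (ω.1, ((), ((), (ω.2.2.2.1, ω.2.2.2.2.1))))) :=
      entG_comp_inj (fun ω : ZMod n1 × (ZMod n2 × (ZMod n3 × (ZMod nw × (ZMod n × ZMod n)))) => q1 ω.1 * (q2 ω.2.1 * (q3 ω.2.2.1 * (qw ω.2.2.2.1 * ((n : ℝ)⁻¹ * qc ω.2.2.2.2.2)))))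
        (fun ω => (ω.1, ((), ((), (ω.2.2.2.1, ω.2.2.2.2.1)))))
        (fun z : ZMod n1 × (Unit × (Unit × (ZMod nw × (ZMod n)))) => (z.1, z.2.2.2.1, z.2.2.2.2)) hg
    have step2 : entG (fun ω : ZMod n1 × (ZMod n2 × (ZMod n3 × (ZMod nw × (ZMod n × ZMod n)))) => q1 ω.1 * (q2 ω.2.1 * (q3 ω.2.2.1 * (qw ω.2.2.2.1 * ((n : ℝ)⁻¹ * qc ω.2.2.2.2.2)))))
        (fun ω => (ω.1, ((), ((), (ω.2.2.2.1, ω.2.2.2.2.1)))))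
        = entG q1 id + entG q2 (fun _ => ()) + entG q3 (fun _ => ()) + entG qw id + entG (fun z : ZMod n × ZMod n => (n : ℝ)⁻¹ * qc z.2) (fun z : ZMod n × ZMod n => z.1) :=
      entG_five q1 q2 q3 qw (fun z : ZMod n × ZMod n => (n : ℝ)⁻¹ * qc z.2)
        id (fun _ => ()) (fun _ => ()) id (fun z : ZMod n × ZMod n => z.1) hq1s hq2s hq3s hqws hpAs
    rw [step1, step2, entG_id q1, entG_unit q2, hq2s, nml_one, entG_unit q3, hq3s, nml_one, entG_id qw, ePa]
    ring
  have c1 : entG (fun ω : ZMod n1 × (ZMod n2 × (ZMod n3 × (ZMod nw × (ZMod n × ZMod n)))) => q1 ω.1 * (q2 ω.2.1 * (q3 ω.2.2.1 * (qw ω.2.2.2.1 * ((n : ℝ)⁻¹ * qc ω.2.2.2.2.2)))))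
      (fun ω => (ω.2.1, ω.2.2.2.1, ω.2.2.2.2.2 - ω.2.2.2.2.1))
      = (-∑ a, nml (q2 a)) + (-∑ a, nml (qw a)) + Real.logb 2 (n : ℝ) := by
    have hg : Function.Injective (fun z : Unit × (ZMod n2 × (Unit × (ZMod nw × (ZMod n)))) => (z.2.1, z.2.2.2.1, z.2.2.2.2)) := by
      rintro ⟨⟨⟩, a2, ⟨⟩, a4, a5⟩ ⟨⟨⟩, b2, ⟨⟩, b4, b5⟩ h
      simp only [Prod.mk.injEq] at h
      obtain ⟨h2, h4, h5⟩ := h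
      subst h2; subst h4; subst h5
      rfl
    have step1 : entG (fun ω : ZMod n1 × (ZMod n2 × (ZMod n3 × (ZMod nw × (ZMod n × ZMod n)))) => q1 ω.1 * (q2 ω.2.1 * (q3 ω.2.2.1 * (qw ω.2.2.2.1 * ((n : ℝ)⁻¹ * qc ω.2.2.2.2.2)))))
        (fun ω => (ω.2.1, ω.2.2.2.1, ω.2.2.2.2.2 - ω.2.2.2.2.1))
        = entG (fun ω : ZMod n1 × (ZMod n2 × (ZMod n3 × (ZMod nw × (ZMod n × ZMod n)))) => q1 ω.1 * (q2 ω.2.1 * (q3 ω.2.2.1 * (qw ω.2.2.2.1 * ((n : ℝ)⁻¹ * qc ω.2.2.2.2.2)))))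
        (fun ω => ((), (ω.2.1, ((), (ω.2.2.2.1, ω.2.2.2.2.2 - ω.2.2.2.2.1))))) :=
      entG_comp_inj (fun ω : ZMod n1 × (ZMod n2 × (ZMod n3 × (ZMod nw × (ZMod n × ZMod n)))) => q1 ω.1 * (q2 ω.2.1 * (q3 ω.2.2.1 * (qw ω.2.2.2.1 * ((n : ℝ)⁻¹ * qc ω.2.2.2.2.2)))))
        (fun ω => ((), (ω.2.1, ((), (ω.2.2.2.1, ω.2.2.2.2.2 - ω.2.2.2.2.1)))))
        (fun z : Unit × (ZMod n2 × (Unit × (ZMod nw × (ZMod n)))) => (z.2.1, z.2.2.2.1, z.2.2.2.2)) hg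
    have step2 : entG (fun ω : ZMod n1 × (ZMod n2 × (ZMod n3 × (ZMod nw × (ZMod n × ZMod n)))) => q1 ω.1 * (q2 ω.2.1 * (q3 ω.2.2.1 * (qw ω.2.2.2.1 * ((n : ℝ)⁻¹ * qc ω.2.2.2.2.2)))))
        (fun ω => ((), (ω.2.1, ((), (ω.2.2.2.1, ω.2.2.2.2.2 - ω.2.2.2.2.1)))))
        = entG q1 (fun _ => ()) + entG q2 id + entG q3 (fun _ => ()) + entG qw id + entG (fun z : ZMod n × ZMod n => (n : ℝ)⁻¹ * qc z.2) (fun z : ZMod n × ZMod n => z.2 - z.1) :=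
      entG_five q1 q2 q3 qw (fun z : ZMod n × ZMod n => (n : ℝ)⁻¹ * qc z.2)
        (fun _ => ()) id (fun _ => ()) id (fun z : ZMod n × ZMod n => z.2 - z.1) hq1s hq2s hq3s hqws hpAs
    rw [step1, step2, entG_unit q1, hq1s, nml_one, entG_id q2, entG_unit q3, hq3s, nml_one, entG_id qw, ePsub]
    ring
  have c2 : entG (fun ω : ZMod n1 × (ZMod n2 × (ZMod n3 × (ZMod nw × (ZMod n × ZMod n)))) => q1 ω.1 * (q2 ω.2.1 * (q3 ω.2.2.1 * (qw ω.2.2.2.1 * ((n : ℝ)⁻¹ * qc ω.2.2.2.2.2)))))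
      (fun ω => (ω.2.2.1, ω.2.2.2.2.2))
      = (-∑ a, nml (q3 a)) + (-∑ a, nml (qc a)) := by
    have hg : Function.Injective (fun z : Unit × (Unit × (ZMod n3 × (Unit × (ZMod n)))) => (z.2.2.1, z.2.2.2.2)) := by
      rintro ⟨⟨⟩, ⟨⟩, a3, ⟨⟩, a5⟩ ⟨⟨⟩, ⟨⟩, b3, ⟨⟩, b5⟩ h
      simp only [Prod.mk.injEq] at h
      obtain ⟨h3, h5⟩ := h
      subst h3; subst h5
      rfl
    have step1 : entG (fun ω : ZMod n1 × (ZMod n2 × (ZMod n3 × (ZMod nw × (ZMod n × ZMod n)))) => q1 ω.1 * (q2 ω.2.1 * (q3 ω.2.2.1 * (qw ω.2.2.2.1 * ((n : ℝ)⁻¹ * qc ω.2.2.2.2.2)))))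
        (fun ω => (ω.2.2.1, ω.2.2.2.2.2))
        = entG (fun ω : ZMod n1 × (ZMod n2 × (ZMod n3 × (ZMod nw × (ZMod n × ZMod n)))) => q1 ω.1 * (q2 ω.2.1 * (q3 ω.2.2.1 * (qw ω.2.2.2.1 * ((n : ℝ)⁻¹ * qc ω.2.2.2.2.2)))))
        (fun ω => ((), ((), (ω.2.2.1, ((), ω.2.2.2.2.2))))) :=
      entG_comp_inj (fun ω : ZMod n1 × (ZMod n2 × (ZMod n3 × (ZMod nw × (ZMod n × ZMod n)))) => q1 ω.1 * (q2 ω.2.1 * (q3 ω.2.2.1 * (qw ω.2.2.2.1 * ((n : ℝ)⁻¹ * qc ω.2.2.2.2.2)))))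
        (fun ω => ((), ((), (ω.2.2.1, ((), ω.2.2.2.2.2)))))
        (fun z : Unit × (Unit × (ZMod n3 × (Unit × (ZMod n)))) => (z.2.2.1, z.2.2.2.2)) hg
    have step2 : entG (fun ω : ZMod n1 × (ZMod n2 × (ZMod n3 × (ZMod nw × (ZMod n × ZMod n)))) => q1 ω.1 * (q2 ω.2.1 * (q3 ω.2.2.1 * (qw ω.2.2.2.1 * ((n : ℝ)⁻¹ * qc ω.2.2.2.2.2)))))
        (fun ω => ((), ((), (ω.2.2.1, ((), ω.2.2.2.2.2)))))
        = entG q1 (fun _ => ()) + entG q2 (fun _ => ()) + entG q3 id + entG qw (fun _ => ()) + entG (fun z : ZMod n × ZMod n => (n : ℝ)⁻¹ * qc z.2) (fun z : ZMod n × ZMod n => z.2) :=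
      entG_five q1 q2 q3 qw (fun z : ZMod n × ZMod n => (n : ℝ)⁻¹ * qc z.2)
        (fun _ => ()) (fun _ => ()) id (fun _ => ()) (fun z : ZMod n × ZMod n => z.2) hq1s hq2s hq3s hqws hpAs
    rw [step1, step2, entG_unit q1, hq1s, nml_one, entG_unit q2, hq2s, nml_one, entG_id q3, entG_unit qw, hqws, nml_one, ePc]
    ring
  have c3 : entG (fun ω : ZMod n1 × (ZMod n2 × (ZMod n3 × (ZMod nw × (ZMod n × ZMod n)))) => q1 ω.1 * (q2 ω.2.1 * (q3 ω.2.2.1 * (qw ω.2.2.2.1 * ((n : ℝ)⁻¹ * qc ω.2.2.2.2.2)))))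
      (fun ω => ((ω.1, ω.2.2.2.1, ω.2.2.2.2.1), (ω.2.1, ω.2.2.2.1, ω.2.2.2.2.2 - ω.2.2.2.2.1)))
      = (-∑ a, nml (q1 a)) + (-∑ a, nml (q2 a)) + (-∑ a, nml (qw a)) + Real.logb 2 (n : ℝ) + (-∑ a, nml (qc a)) := by
    have hg : Function.Injective (fun z : ZMod n1 × (ZMod n2 × (Unit × (ZMod nw × (ZMod n × ZMod n)))) => ((z.1, z.2.2.2.1, z.2.2.2.2.1), (z.2.1, z.2.2.2.1, z.2.2.2.2.2 - z.2.2.2.2.1))) := by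
      rintro ⟨a1, a2, ⟨⟩, a4, a5, a6⟩ ⟨b1, b2, ⟨⟩, b4, b5, b6⟩ h
      simp only [Prod.mk.injEq] at h
      obtain ⟨⟨h1, h4, h5⟩, h2, -, h6⟩ := h
      subst h1; subst h2; subst h4; subst h5
      rw [sub_left_inj] at h6
      subst h6
      rfl
    have step1 : entG (fun ω : ZMod n1 × (ZMod n2 × (ZMod n3 × (ZMod nw × (ZMod n × ZMod n)))) => q1 ω.1 * (q2 ω.2.1 * (q3 ω.2.2.1 * (qw ω.2.2.2.1 * ((n : ℝ)⁻¹ * qc ω.2.2.2.2.2)))))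
        (fun ω => ((ω.1, ω.2.2.2.1, ω.2.2.2.2.1), (ω.2.1, ω.2.2.2.1, ω.2.2.2.2.2 - ω.2.2.2.2.1)))
        = entG (fun ω : ZMod n1 × (ZMod n2 × (ZMod n3 × (ZMod nw × (ZMod n × ZMod n)))) => q1 ω.1 * (q2 ω.2.1 * (q3 ω.2.2.1 * (qw ω.2.2.2.1 * ((n : ℝ)⁻¹ * qc ω.2.2.2.2.2)))))
        (fun ω => (ω.1, (ω.2.1, ((), (ω.2.2.2.1, (ω.2.2.2.2.1, ω.2.2.2.2.2)))))) :=
      entG_comp_inj (fun ω : ZMod n1 × (ZMod n2 × (ZMod n3 × (ZMod nw × (ZMod n × ZMod n)))) => q1 ω.1 * (q2 ω.2.1 * (q3 ω.2.2.1 * (qw ω.2.2.2.1 * ((n : ℝ)⁻¹ * qc ω.2.2.2.2.2)))))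
        (fun ω => (ω.1, (ω.2.1, ((), (ω.2.2.2.1, (ω.2.2.2.2.1, ω.2.2.2.2.2))))))
        (fun z : ZMod n1 × (ZMod n2 × (Unit × (ZMod nw × (ZMod n × ZMod n)))) => ((z.1, z.2.2.2.1, z.2.2.2.2.1), (z.2.1, z.2.2.2.1, z.2.2.2.2.2 - z.2.2.2.2.1))) hg
    have step2 : entG (fun ω : ZMod n1 × (ZMod n2 × (ZMod n3 × (ZMod nw × (ZMod n × ZMod n)))) => q1 ω.1 * (q2 ω.2.1 * (q3 ω.2.2.1 * (qw ω.2.2.2.1 * ((n : ℝ)⁻¹ * qc ω.2.2.2.2.2)))))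
        (fun ω => (ω.1, (ω.2.1, ((), (ω.2.2.2.1, (ω.2.2.2.2.1, ω.2.2.2.2.2))))))
        = entG q1 id + entG q2 id + entG q3 (fun _ => ()) + entG qw id + entG (fun z : ZMod n × ZMod n => (n : ℝ)⁻¹ * qc z.2) (fun z : ZMod n × ZMod n => (z.1, z.2)) :=
      entG_five q1 q2 q3 qw (fun z : ZMod n × ZMod n => (n : ℝ)⁻¹ * qc z.2)
        id id (fun _ => ()) id (fun z : ZMod n × ZMod n => (z.1, z.2)) hq1s hq2s hq3s hqws hpAs
    rw [step1, step2, entG_id q1, entG_id q2, entG_unit q3, hq3s, nml_one, entG_id qw, eP]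
    ring
  have c4 : entG (fun ω : ZMod n1 × (ZMod n2 × (ZMod n3 × (ZMod nw × (ZMod n × ZMod n)))) => q1 ω.1 * (q2 ω.2.1 * (q3 ω.2.2.1 * (qw ω.2.2.2.1 * ((n : ℝ)⁻¹ * qc ω.2.2.2.2.2)))))
      (fun ω => ((ω.1, ω.2.2.2.1, ω.2.2.2.2.1), (ω.2.2.1, ω.2.2.2.2.2)))
      = (-∑ a, nml (q1 a)) + (-∑ a, nml (q3 a)) + (-∑ a, nml (qw a)) + Real.logb 2 (n : ℝ) + (-∑ a, nml (qc a)) := by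
    have hg : Function.Injective (fun z : ZMod n1 × (Unit × (ZMod n3 × (ZMod nw × (ZMod n × ZMod n)))) => ((z.1, z.2.2.2.1, z.2.2.2.2.1), (z.2.2.1, z.2.2.2.2.2))) := by
      rintro ⟨a1, ⟨⟩, a3, a4, a5, a6⟩ ⟨b1, ⟨⟩, b3, b4, b5, b6⟩ h
      simp only [Prod.mk.injEq] at h
      obtain ⟨⟨h1, h4, h5⟩, h3, h6⟩ := h
      subst h1; subst h3; subst h4; subst h5; subst h6
      rfl
    have step1 : entG (fun ω : ZMod n1 × (ZMod n2 × (ZMod n3 × (ZMod nw × (ZMod n × ZMod n)))) => q1 ω.1 * (q2 ω.2.1 * (q3 ω.2.2.1 * (qw ω.2.2.2.1 * ((n : ℝ)⁻¹ * qc ω.2.2.2.2.2)))))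
        (fun ω => ((ω.1, ω.2.2.2.1, ω.2.2.2.2.1), (ω.2.2.1, ω.2.2.2.2.2)))
        = entG (fun ω : ZMod n1 × (ZMod n2 × (ZMod n3 × (ZMod nw × (ZMod n × ZMod n)))) => q1 ω.1 * (q2 ω.2.1 * (q3 ω.2.2.1 * (qw ω.2.2.2.1 * ((n : ℝ)⁻¹ * qc ω.2.2.2.2.2)))))
        (fun ω => (ω.1, ((), (ω.2.2.1, (ω.2.2.2.1, (ω.2.2.2.2.1, ω.2.2.2.2.2)))))) :=
      entG_comp_inj (fun ω : ZMod n1 × (ZMod n2 × (ZMod n3 × (ZMod nw × (ZMod n × ZMod n)))) => q1 ω.1 * (q2 ω.2.1 * (q3 ω.2.2.1 * (qw ω.2.2.2.1 * ((n : ℝ)⁻¹ * qc ω.2.2.2.2.2)))))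
        (fun ω => (ω.1, ((), (ω.2.2.1, (ω.2.2.2.1, (ω.2.2.2.2.1, ω.2.2.2.2.2))))))
        (fun z : ZMod n1 × (Unit × (ZMod n3 × (ZMod nw × (ZMod n × ZMod n)))) => ((z.1, z.2.2.2.1, z.2.2.2.2.1), (z.2.2.1, z.2.2.2.2.2))) hg
    have step2 : entG (fun ω : ZMod n1 × (ZMod n2 × (ZMod n3 × (ZMod nw × (ZMod n × ZMod n)))) => q1 ω.1 * (q2 ω.2.1 * (q3 ω.2.2.1 * (qw ω.2.2.2.1 * ((n : ℝ)⁻¹ * qc ω.2.2.2.2.2)))))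
        (fun ω => (ω.1, ((), (ω.2.2.1, (ω.2.2.2.1, (ω.2.2.2.2.1, ω.2.2.2.2.2))))))
        = entG q1 id + entG q2 (fun _ => ()) + entG q3 id + entG qw id + entG (fun z : ZMod n × ZMod n => (n : ℝ)⁻¹ * qc z.2) (fun z : ZMod n × ZMod n => (z.1, z.2)) :=
      entG_five q1 q2 q3 qw (fun z : ZMod n × ZMod n => (n : ℝ)⁻¹ * qc z.2)
        id (fun _ => ()) id id (fun z : ZMod n × ZMod n => (z.1, z.2)) hq1s hq2s hq3s hqws hpAs
    rw [step1, step2, entG_id q1, entG_unit q2, hq2s, nml_one, entG_id q3, entG_id qw, eP]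
    ring
  have c5 : entG (fun ω : ZMod n1 × (ZMod n2 × (ZMod n3 × (ZMod nw × (ZMod n × ZMod n)))) => q1 ω.1 * (q2 ω.2.1 * (q3 ω.2.2.1 * (qw ω.2.2.2.1 * ((n : ℝ)⁻¹ * qc ω.2.2.2.2.2)))))
      (fun ω => ((ω.2.1, ω.2.2.2.1, ω.2.2.2.2.2 - ω.2.2.2.2.1), (ω.2.2.1, ω.2.2.2.2.2)))
      = (-∑ a, nml (q2 a)) + (-∑ a, nml (q3 a)) + (-∑ a, nml (qw a)) + Real.logb 2 (n : ℝ) + (-∑ a, nml (qc a)) := by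
    have hg : Function.Injective (fun z : Unit × (ZMod n2 × (ZMod n3 × (ZMod nw × (ZMod n × ZMod n)))) => ((z.2.1, z.2.2.2.1, z.2.2.2.2.2 - z.2.2.2.2.1), (z.2.2.1, z.2.2.2.2.2))) := by
      rintro ⟨⟨⟩, a2, a3, a4, a5, a6⟩ ⟨⟨⟩, b2, b3, b4, b5, b6⟩ h
      simp only [Prod.mk.injEq] at h
      obtain ⟨⟨h2, h4, hsub⟩, h3, h6⟩ := h
      subst h2; subst h3; subst h4; subst h6
      rw [sub_right_inj] at hsub
      subst hsub
      rfl
    have step1 : entG (fun ω : ZMod n1 × (ZMod n2 × (ZMod n3 × (ZMod nw × (ZMod n × ZMod n)))) => q1 ω.1 * (q2 ω.2.1 * (q3 ω.2.2.1 * (qw ω.2.2.2.1 * ((n : ℝ)⁻¹ * qc ω.2.2.2.2.2)))))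
        (fun ω => ((ω.2.1, ω.2.2.2.1, ω.2.2.2.2.2 - ω.2.2.2.2.1), (ω.2.2.1, ω.2.2.2.2.2)))
        = entG (fun ω : ZMod n1 × (ZMod n2 × (ZMod n3 × (ZMod nw × (ZMod n × ZMod n)))) => q1 ω.1 * (q2 ω.2.1 * (q3 ω.2.2.1 * (qw ω.2.2.2.1 * ((n : ℝ)⁻¹ * qc ω.2.2.2.2.2)))))
        (fun ω => ((), (ω.2.1, (ω.2.2.1, (ω.2.2.2.1, (ω.2.2.2.2.1, ω.2.2.2.2.2)))))) :=
      entG_comp_inj (fun ω : ZMod n1 × (ZMod n2 × (ZMod n3 × (ZMod nw × (ZMod n × ZMod n)))) => q1 ω.1 * (q2 ω.2.1 * (q3 ω.2.2.1 * (qw ω.2.2.2.1 * ((n : ℝ)⁻¹ * qc ω.2.2.2.2.2)))))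
        (fun ω => ((), (ω.2.1, (ω.2.2.1, (ω.2.2.2.1, (ω.2.2.2.2.1, ω.2.2.2.2.2))))))
        (fun z : Unit × (ZMod n2 × (ZMod n3 × (ZMod nw × (ZMod n × ZMod n)))) => ((z.2.1, z.2.2.2.1, z.2.2.2.2.2 - z.2.2.2.2.1), (z.2.2.1, z.2.2.2.2.2))) hg
    have step2 : entG (fun ω : ZMod n1 × (ZMod n2 × (ZMod n3 × (ZMod nw × (ZMod n × ZMod n)))) => q1 ω.1 * (q2 ω.2.1 * (q3 ω.2.2.1 * (qw ω.2.2.2.1 * ((n : ℝ)⁻¹ * qc ω.2.2.2.2.2)))))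
        (fun ω => ((), (ω.2.1, (ω.2.2.1, (ω.2.2.2.1, (ω.2.2.2.2.1, ω.2.2.2.2.2))))))
        = entG q1 (fun _ => ()) + entG q2 id + entG q3 id + entG qw id + entG (fun z : ZMod n × ZMod n => (n : ℝ)⁻¹ * qc z.2) (fun z : ZMod n × ZMod n => (z.1, z.2)) :=
      entG_five q1 q2 q3 qw (fun z : ZMod n × ZMod n => (n : ℝ)⁻¹ * qc z.2)
        (fun _ => ()) id id id (fun z : ZMod n × ZMod n => (z.1, z.2)) hq1s hq2s hq3s hqws hpAs
    rw [step1, step2, entG_unit q1, hq1s, nml_one, entG_id q2, entG_id q3, entG_id qw, eP]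
    ring
  have c6 : entG (fun ω : ZMod n1 × (ZMod n2 × (ZMod n3 × (ZMod nw × (ZMod n × ZMod n)))) => q1 ω.1 * (q2 ω.2.1 * (q3 ω.2.2.1 * (qw ω.2.2.2.1 * ((n : ℝ)⁻¹ * qc ω.2.2.2.2.2)))))
      (fun ω => ((ω.1, ω.2.2.2.1, ω.2.2.2.2.1), (ω.2.1, ω.2.2.2.1, ω.2.2.2.2.2 - ω.2.2.2.2.1), (ω.2.2.1, ω.2.2.2.2.2)))
      = (-∑ a, nml (q1 a)) + (-∑ a, nml (q2 a)) + (-∑ a, nml (q3 a)) + (-∑ a, nml (qw a)) + Real.logb 2 (n : ℝ) + (-∑ a, nml (qc a)) := by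
    have hg : Function.Injective (fun z : ZMod n1 × (ZMod n2 × (ZMod n3 × (ZMod nw × (ZMod n × ZMod n)))) => ((z.1, z.2.2.2.1, z.2.2.2.2.1), (z.2.1, z.2.2.2.1, z.2.2.2.2.2 - z.2.2.2.2.1), (z.2.2.1, z.2.2.2.2.2))) := by
      rintro ⟨a1, a2, a3, a4, a5, a6⟩ ⟨b1, b2, b3, b4, b5, b6⟩ h
      simp only [Prod.mk.injEq] at h
      obtain ⟨⟨h1, h4, h5⟩, ⟨h2, -, -⟩, h3, h6⟩ := h
      subst h1; subst h2; subst h3; subst h4; subst h5; subst h6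
      rfl
    have step1 : entG (fun ω : ZMod n1 × (ZMod n2 × (ZMod n3 × (ZMod nw × (ZMod n × ZMod n)))) => q1 ω.1 * (q2 ω.2.1 * (q3 ω.2.2.1 * (qw ω.2.2.2.1 * ((n : ℝ)⁻¹ * qc ω.2.2.2.2.2)))))
        (fun ω => ((ω.1, ω.2.2.2.1, ω.2.2.2.2.1), (ω.2.1, ω.2.2.2.1, ω.2.2.2.2.2 - ω.2.2.2.2.1), (ω.2.2.1, ω.2.2.2.2.2)))
        = entG (fun ω : ZMod n1 × (ZMod n2 × (ZMod n3 × (ZMod nw × (ZMod n × ZMod n)))) => q1 ω.1 * (q2 ω.2.1 * (q3 ω.2.2.1 * (qw ω.2.2.2.1 * ((n : ℝ)⁻¹ * qc ω.2.2.2.2.2)))))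
        (fun ω => (ω.1, (ω.2.1, (ω.2.2.1, (ω.2.2.2.1, (ω.2.2.2.2.1, ω.2.2.2.2.2)))))) :=
      entG_comp_inj (fun ω : ZMod n1 × (ZMod n2 × (ZMod n3 × (ZMod nw × (ZMod n × ZMod n)))) => q1 ω.1 * (q2 ω.2.1 * (q3 ω.2.2.1 * (qw ω.2.2.2.1 * ((n : ℝ)⁻¹ * qc ω.2.2.2.2.2)))))
        (fun ω => (ω.1, (ω.2.1, (ω.2.2.1, (ω.2.2.2.1, (ω.2.2.2.2.1, ω.2.2.2.2.2))))))
        (fun z : ZMod n1 × (ZMod n2 × (ZMod n3 × (ZMod nw × (ZMod n × ZMod n)))) => ((z.1, z.2.2.2.1, z.2.2.2.2.1), (z.2.1, z.2.2.2.1, z.2.2.2.2.2 - z.2.2.2.2.1), (z.2.2.1, z.2.2.2.2.2))) hg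
    have step2 : entG (fun ω : ZMod n1 × (ZMod n2 × (ZMod n3 × (ZMod nw × (ZMod n × ZMod n)))) => q1 ω.1 * (q2 ω.2.1 * (q3 ω.2.2.1 * (qw ω.2.2.2.1 * ((n : ℝ)⁻¹ * qc ω.2.2.2.2.2)))))
        (fun ω => (ω.1, (ω.2.1, (ω.2.2.1, (ω.2.2.2.1, (ω.2.2.2.2.1, ω.2.2.2.2.2))))))
        = entG q1 id + entG q2 id + entG q3 id + entG qw id + entG (fun z : ZMod n × ZMod n => (n : ℝ)⁻¹ * qc z.2) (fun z : ZMod n × ZMod n => (z.1, z.2)) :=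
      entG_five q1 q2 q3 qw (fun z : ZMod n × ZMod n => (n : ℝ)⁻¹ * qc z.2)
        id id id id (fun z : ZMod n × ZMod n => (z.1, z.2)) hq1s hq2s hq3s hqws hpAs
    rw [step1, step2, entG_id q1, entG_id q2, entG_id q3, entG_id qw, eP]
    ring
  have hvec : ![(-∑ a, nml (q1 a)) + (-∑ a, nml (qw a)) + Real.logb 2 (n : ℝ),
      (-∑ a, nml (q2 a)) + (-∑ a, nml (qw a)) + Real.logb 2 (n : ℝ),
      (-∑ a, nml (q3 a)) + (-∑ a, nml (qc a)),
      (-∑ a, nml (q1 a)) + (-∑ a, nml (q2 a)) + (-∑ a, nml (qw a)) + Real.logb 2 (n : ℝ) + (-∑ a, nml (qc a)),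
      (-∑ a, nml (q1 a)) + (-∑ a, nml (q3 a)) + (-∑ a, nml (qw a)) + Real.logb 2 (n : ℝ) + (-∑ a, nml (qc a)),
      (-∑ a, nml (q2 a)) + (-∑ a, nml (q3 a)) + (-∑ a, nml (qw a)) + Real.logb 2 (n : ℝ) + (-∑ a, nml (qc a)),
      (-∑ a, nml (q1 a)) + (-∑ a, nml (q2 a)) + (-∑ a, nml (q3 a)) + (-∑ a, nml (qw a)) + Real.logb 2 (n : ℝ) + (-∑ a, nml (qc a))]
      = ![entG (fun ω : ZMod n1 × (ZMod n2 × (ZMod n3 × (ZMod nw × (ZMod n × ZMod n)))) => q1 ω.1 * (q2 ω.2.1 * (q3 ω.2.2.1 * (qw ω.2.2.2.1 * ((n : ℝ)⁻¹ * qc ω.2.2.2.2.2))))) (fun ω => (ω.1, ω.2.2.2.1, ω.2.2.2.2.1)),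
          entG (fun ω : ZMod n1 × (ZMod n2 × (ZMod n3 × (ZMod nw × (ZMod n × ZMod n)))) => q1 ω.1 * (q2 ω.2.1 * (q3 ω.2.2.1 * (qw ω.2.2.2.1 * ((n : ℝ)⁻¹ * qc ω.2.2.2.2.2))))) (fun ω => (ω.2.1, ω.2.2.2.1, ω.2.2.2.2.2 - ω.2.2.2.2.1)),
          entG (fun ω : ZMod n1 × (ZMod n2 × (ZMod n3 × (ZMod nw × (ZMod n × ZMod n)))) => q1 ω.1 * (q2 ω.2.1 * (q3 ω.2.2.1 * (qw ω.2.2.2.1 * ((n : ℝ)⁻¹ * qc ω.2.2.2.2.2))))) (fun ω => (ω.2.2.1, ω.2.2.2.2.2)),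
          entG (fun ω : ZMod n1 × (ZMod n2 × (ZMod n3 × (ZMod nw × (ZMod n × ZMod n)))) => q1 ω.1 * (q2 ω.2.1 * (q3 ω.2.2.1 * (qw ω.2.2.2.1 * ((n : ℝ)⁻¹ * qc ω.2.2.2.2.2))))) (fun ω => ((fun ω => (ω.1, ω.2.2.2.1, ω.2.2.2.2.1)) ω, (fun ω => (ω.2.1, ω.2.2.2.1, ω.2.2.2.2.2 - ω.2.2.2.2.1)) ω)),
          entG (fun ω : ZMod n1 × (ZMod n2 × (ZMod n3 × (ZMod nw × (ZMod n × ZMod n)))) => q1 ω.1 * (q2 ω.2.1 * (q3 ω.2.2.1 * (qw ω.2.2.2.1 * ((n : ℝ)⁻¹ * qc ω.2.2.2.2.2))))) (fun ω => ((fun ω => (ω.1, ω.2.2.2.1, ω.2.2.2.2.1)) ω, (fun ω => (ω.2.2.1, ω.2.2.2.2.2)) ω)),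
          entG (fun ω : ZMod n1 × (ZMod n2 × (ZMod n3 × (ZMod nw × (ZMod n × ZMod n)))) => q1 ω.1 * (q2 ω.2.1 * (q3 ω.2.2.1 * (qw ω.2.2.2.1 * ((n : ℝ)⁻¹ * qc ω.2.2.2.2.2))))) (fun ω => ((fun ω => (ω.2.1, ω.2.2.2.1, ω.2.2.2.2.2 - ω.2.2.2.2.1)) ω, (fun ω => (ω.2.2.1, ω.2.2.2.2.2)) ω)),
          entG (fun ω : ZMod n1 × (ZMod n2 × (ZMod n3 × (ZMod nw × (ZMod n × ZMod n)))) => q1 ω.1 * (q2 ω.2.1 * (q3 ω.2.2.1 * (qw ω.2.2.2.1 * ((n : ℝ)⁻¹ * qc ω.2.2.2.2.2))))) (fun ω => ((fun ω => (ω.1, ω.2.2.2.1, ω.2.2.2.2.1)) ω, (fun ω => (ω.2.1, ω.2.2.2.1, ω.2.2.2.2.2 - ω.2.2.2.2.1)) ω, (fun ω => (ω.2.2.1, ω.2.2.2.2.2)) ω))] := by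
    funext i
    fin_cases i <;> simp only [Matrix.cons_val_zero, Matrix.cons_val_one, Matrix.head_cons,
      Matrix.cons_val_two, Matrix.tail_cons, Matrix.cons_val_three, Matrix.cons_val_four,
      Fin.isValue]
    · exact c0.symm
    · exact c1.symm
    · exact c2.symm
    · exact c3.symm
    · exact c4.symm
    · exact c5.symm
    · exact c6.symm
  rw [hvec]
  exact key

lemma my_cons_val_five {α : Type*} {m : ℕ} (x : α) (u : Fin m.succ.succ.succ.succ.succ → α) :
    Matrix.vecCons x u 5
      = Matrix.vecHead (Matrix.vecTail (Matrix.vecTail (Matrix.vecTail (Matrix.vecTail u)))) :=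
  rfl

lemma my_cons_val_six {α : Type*} {m : ℕ} (x : α) (u : Fin m.succ.succ.succ.succ.succ.succ → α) :
    Matrix.vecCons x u 6
      = Matrix.vecHead (Matrix.vecTail (Matrix.vecTail (Matrix.vecTail (Matrix.vecTail (Matrix.vecTail u))))) :=
  rfl

/-- If λ₁,λ₂,λ₃,λ₁₂,λ₁₂₃' ≥ 0 and either λ₁₂+λ₁₂₃' ≥ log₂⌈2^{λ₁₂₃'}⌉ or
λ₁₂₃' = log₂ m for a positive integer m, then
λ₁e₁+λ₂e₂+λ₃e₃+λ₁₂e₁₂+λ₁₂₃'e₁₂₃' is an entropy vector. -/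
theorem stmt10 (l1 l2 l3 l12 l : ℝ)
    (h1 : 0 ≤ l1) (h2 : 0 ≤ l2) (h3 : 0 ≤ l3) (h12 : 0 ≤ l12) (hl : 0 ≤ l)
    (hcond : l12 + l ≥ Real.logb 2 ((⌈(2:ℝ) ^ l⌉ : ℤ) : ℝ) ∨
             ∃ m : ℕ, 0 < m ∧ l = Real.logb 2 (m : ℝ)) :
    IsEntropic (l1 • e1 + l2 • e2 + l3 • e3 + l12 • e12 + l • e123') := by
  classical
  obtain ⟨hn1pos, hn1log⟩ := ceil_spec h1
  obtain ⟨hn2pos, hn2log⟩ := ceil_spec h2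
  obtain ⟨hn3pos, hn3log⟩ := ceil_spec h3
  obtain ⟨hnpos, hnlog⟩ := ceil_spec hl
  have hA : Real.logb 2 (((⌈(2:ℝ) ^ l⌉).toNat : ℕ) : ℝ) ≤ l12 + l := by
    rcases hcond with hc | ⟨m, hm, hlm⟩
    · have hcast : (((⌈(2:ℝ) ^ l⌉).toNat : ℕ) : ℝ) = ((⌈(2:ℝ) ^ l⌉ : ℤ) : ℝ) := by
        have hc0 : (0:ℤ) ≤ ⌈(2:ℝ) ^ l⌉ := by
          have : (0:ℝ) < 2 ^ l := Real.rpow_pos_of_pos two_pos l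
          exact (Int.ceil_pos.mpr this).le
        exact_mod_cast congrArg (fun z : ℤ => (z : ℝ)) (Int.toNat_of_nonneg hc0)
      rw [hcast]
      exact hc
    · have h2l : (2:ℝ) ^ l = (m : ℝ) := by
        rw [hlm]
        exact Real.rpow_logb two_pos (by norm_num) (by exact_mod_cast hm)
      have hnm : (⌈(2:ℝ) ^ l⌉).toNat = m := by
        rw [h2l, Int.ceil_natCast]
        exact Int.toNat_natCast m
      rw [hnm, ← hlm]
      linarith
  have hlw : 0 ≤ l12 + l - Real.logb 2 (((⌈(2:ℝ) ^ l⌉).toNat : ℕ) : ℝ) := by linarith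
  obtain ⟨hnwpos, hnwlog⟩ := ceil_spec hlw
  haveI i1 : NeZero ((⌈(2:ℝ) ^ l1⌉).toNat) := ⟨hn1pos.ne'⟩
  haveI i2 : NeZero ((⌈(2:ℝ) ^ l2⌉).toNat) := ⟨hn2pos.ne'⟩
  haveI i3 : NeZero ((⌈(2:ℝ) ^ l3⌉).toNat) := ⟨hn3pos.ne'⟩
  haveI iw : NeZero ((⌈(2:ℝ) ^ (l12 + l - Real.logb 2 (((⌈(2:ℝ) ^ l⌉).toNat : ℕ) : ℝ))⌉).toNat) :=
    ⟨hnwpos.ne'⟩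
  haveI ic : NeZero ((⌈(2:ℝ) ^ l⌉).toNat) := ⟨hnpos.ne'⟩
  haveI j1 : Nonempty (ZMod ((⌈(2:ℝ) ^ l1⌉).toNat)) := ⟨0⟩
  haveI j2 : Nonempty (ZMod ((⌈(2:ℝ) ^ l2⌉).toNat)) := ⟨0⟩
  haveI j3 : Nonempty (ZMod ((⌈(2:ℝ) ^ l3⌉).toNat)) := ⟨0⟩
  haveI jw : Nonempty (ZMod ((⌈(2:ℝ) ^ (l12 + l - Real.logb 2 (((⌈(2:ℝ) ^ l⌉).toNat : ℕ) : ℝ))⌉).toNat)) := ⟨0⟩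
  haveI jc : Nonempty (ZMod ((⌈(2:ℝ) ^ l⌉).toNat)) := ⟨0⟩
  obtain ⟨q1, hq1n, hq1s, hq1e⟩ :=
    exists_dist (A := ZMod ((⌈(2:ℝ) ^ l1⌉).toNat)) h1 (by rw [ZMod.card]; exact hn1log)
  obtain ⟨q2, hq2n, hq2s, hq2e⟩ :=
    exists_dist (A := ZMod ((⌈(2:ℝ) ^ l2⌉).toNat)) h2 (by rw [ZMod.card]; exact hn2log)
  obtain ⟨q3, hq3n, hq3s, hq3e⟩ :=
    exists_dist (A := ZMod ((⌈(2:ℝ) ^ l3⌉).toNat)) h3 (by rw [ZMod.card]; exact hn3log)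
  obtain ⟨qw, hqwn, hqws, hqwe⟩ :=
    exists_dist (A := ZMod ((⌈(2:ℝ) ^ (l12 + l - Real.logb 2 (((⌈(2:ℝ) ^ l⌉).toNat : ℕ) : ℝ))⌉).toNat))
      hlw (by rw [ZMod.card]; exact hnwlog)
  obtain ⟨qc, hqcn, hqcs, hqce⟩ :=
    exists_dist (A := ZMod ((⌈(2:ℝ) ^ l⌉).toNat)) hl (by rw [ZMod.card]; exact hnlog)
  have key := isEntropic_construction
    ((⌈(2:ℝ) ^ l1⌉).toNat) ((⌈(2:ℝ) ^ l2⌉).toNat) ((⌈(2:ℝ) ^ l3⌉).toNat)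
    ((⌈(2:ℝ) ^ (l12 + l - Real.logb 2 (((⌈(2:ℝ) ^ l⌉).toNat : ℕ) : ℝ))⌉).toNat)
    ((⌈(2:ℝ) ^ l⌉).toNat)
    q1 q2 q3 qw qc hq1n hq1s hq2n hq2s hq3n hq3s hqwn hqws hqcn hqcs
  rw [hq1e, hq2e, hq3e, hqwe, hqce] at key
  have hvec : l1 • e1 + l2 • e2 + l3 • e3 + l12 • e12 + l • e123'
      = ![l1 + (l12 + l - Real.logb 2 (((⌈(2:ℝ) ^ l⌉).toNat : ℕ) : ℝ))
            + Real.logb 2 (((⌈(2:ℝ) ^ l⌉).toNat : ℕ) : ℝ),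
          l2 + (l12 + l - Real.logb 2 (((⌈(2:ℝ) ^ l⌉).toNat : ℕ) : ℝ))
            + Real.logb 2 (((⌈(2:ℝ) ^ l⌉).toNat : ℕ) : ℝ),
          l3 + l,
          l1 + l2 + (l12 + l - Real.logb 2 (((⌈(2:ℝ) ^ l⌉).toNat : ℕ) : ℝ))
            + Real.logb 2 (((⌈(2:ℝ) ^ l⌉).toNat : ℕ) : ℝ) + l,
          l1 + l3 + (l12 + l - Real.logb 2 (((⌈(2:ℝ) ^ l⌉).toNat : ℕ) : ℝ))
            + Real.logb 2 (((⌈(2:ℝ) ^ l⌉).toNat : ℕ) : ℝ) + l,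
          l2 + l3 + (l12 + l - Real.logb 2 (((⌈(2:ℝ) ^ l⌉).toNat : ℕ) : ℝ))
            + Real.logb 2 (((⌈(2:ℝ) ^ l⌉).toNat : ℕ) : ℝ) + l,
          l1 + l2 + l3 + (l12 + l - Real.logb 2 (((⌈(2:ℝ) ^ l⌉).toNat : ℕ) : ℝ))
            + Real.logb 2 (((⌈(2:ℝ) ^ l⌉).toNat : ℕ) : ℝ) + l] := by
    funext i
    fin_cases i <;>
      simp [e1, e2, e3, e12, e123', my_cons_val_five, my_cons_val_six, Pi.add_apply, Pi.smul_apply, smul_eq_mul] <;> ring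
  rw [hvec]
  exact key
end

section
/- There exist finite-alphabet random variables X_1, X_2, X_3, with X_1 and X_2 taking values in 9-element alphabets and X_3 in a 6-element alphabet, such that: (X_1, X_2, X_3) is uniformly distributed on a support of exactly 216 triples; (X_1, X_3) and (X_2, X_3) are each uniformly distributed on all 54 pairs; X_1 and X_2 are uniform on their 9-element alphabets; X_3 is uniform on its 6-element alphabet; and H(X_1, X_2) = log₂ ζ, where ζ = 54^{1/2} · 72^{1/4} · 108^{1/6} · 216^{1/12}. Consequently g = (log₂ 9, log₂ 9, log₂ 6, log₂ ζ, log₂ 54, log₂ 54, log₂ 216) is an entropy vector. -/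
open Finset

noncomputable def zeta : ℝ :=
  (54:ℝ) ^ ((1:ℝ)/2) * (72:ℝ) ^ ((1:ℝ)/4) * (108:ℝ) ^ ((1:ℝ)/6) * (216:ℝ) ^ ((1:ℝ)/12)

noncomputable def g : Fin 7 → ℝ :=
  ![Real.logb 2 9, Real.logb 2 9, Real.logb 2 6, Real.logb 2 zeta,
    Real.logb 2 54, Real.logb 2 54, Real.logb 2 216]

/- ## Auxiliary construction -/

set_option maxRecDepth 40000

def Sv (t k : ℕ) : ℕ :=
  ([[0,1,2,3],[0,1,2,4],[0,1,2,3],[4,5,6,7],[0,1,2,8],[3,4,5,6]].getD t []).getD k 0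

def Y1 (ω : Fin 216) : Fin 9 := ⟨ω.val % 36 / 4, by omega⟩
def Y3 (ω : Fin 216) : Fin 6 := ⟨ω.val / 36, by omega⟩
def Y2 (ω : Fin 216) : Fin 9 :=
  ⟨(ω.val % 36 / 4 + 9 - Sv (ω.val / 36) (ω.val % 4)) % 9, by omega⟩

def Mf : Fin 9 → Fin 9 → ℕ :=
  ![![4,1,1,2,2,3,3,4,4], ![4,4,1,1,2,2,3,3,4], ![4,4,4,1,1,2,2,3,3],
    ![3,4,4,4,1,1,2,2,3], ![3,3,4,4,4,1,1,2,2], ![2,3,3,4,4,4,1,1,2],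
    ![2,2,3,3,4,4,4,1,1], ![1,2,2,3,3,4,4,4,1], ![1,1,2,2,3,3,4,4,4]]

def cnt123 (a : Fin 9 × Fin 9 × Fin 6) : ℕ :=
  ((univ : Finset (Fin 216)).filter (fun ω => (Y1 ω, Y2 ω, Y3 ω) = a)).card

lemma aux_pr_unif {A : Type} [DecidableEq A] (X : Fin 216 → A) (a : A) :
    pr (fun _ => (216:ℝ)⁻¹) X a
      = ((univ.filter (fun ω => X ω = a)).card : ℝ) / 216 := by
  unfold pr
  rw [← Finset.sum_filter, Finset.sum_const, nsmul_eq_mul]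
  ring

lemma aux_cnt13 : ∀ a : Fin 9 × Fin 6,
    ((univ : Finset (Fin 216)).filter (fun ω => (Y1 ω, Y3 ω) = a)).card = 4 := by decide

lemma aux_cnt23 : ∀ a : Fin 9 × Fin 6,
    ((univ : Finset (Fin 216)).filter (fun ω => (Y2 ω, Y3 ω) = a)).card = 4 := by decide

lemma aux_cnt1 : ∀ a : Fin 9,
    ((univ : Finset (Fin 216)).filter (fun ω => Y1 ω = a)).card = 24 := by decide

lemma aux_cnt2 : ∀ a : Fin 9,
    ((univ : Finset (Fin 216)).filter (fun ω => Y2 ω = a)).card = 24 := by decide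

lemma aux_cnt3 : ∀ a : Fin 6,
    ((univ : Finset (Fin 216)).filter (fun ω => Y3 ω = a)).card = 36 := by decide

lemma aux_cnt12 : ∀ a : Fin 9 × Fin 9,
    ((univ : Finset (Fin 216)).filter (fun ω => (Y1 ω, Y2 ω) = a)).card = Mf a.1 a.2 := by
  decide

lemma aux_img12 :
    (univ : Finset (Fin 9 × Fin 9)).image (fun a => Mf a.1 a.2) = {4,3,2,1} := by decide

lemma aux_f4 :
    ((univ : Finset (Fin 9 × Fin 9)).filter fun a => Mf a.1 a.2 = 4).card = 27 := by decide
lemma aux_f3 :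
    ((univ : Finset (Fin 9 × Fin 9)).filter fun a => Mf a.1 a.2 = 3).card = 18 := by decide
lemma aux_f2 :
    ((univ : Finset (Fin 9 × Fin 9)).filter fun a => Mf a.1 a.2 = 2).card = 18 := by decide
lemma aux_f1 :
    ((univ : Finset (Fin 9 × Fin 9)).filter fun a => Mf a.1 a.2 = 1).card = 18 := by decide

lemma aux_Sv_lt : ∀ t : Fin 6, ∀ k : Fin 4, Sv t.val k.val < 9 := by decide
lemma aux_Sv_inj : ∀ t : Fin 6, ∀ k k' : Fin 4,
    Sv t.val k.val = Sv t.val k'.val → k = k' := by decide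

lemma aux_Yinj : Function.Injective (fun ω : Fin 216 => (Y1 ω, Y2 ω, Y3 ω)) := by
  intro a b h
  simp only [Y1, Y2, Y3, Prod.mk.injEq, Fin.mk.injEq] at h
  obtain ⟨h1, h2, h3⟩ := h
  have hsa := aux_Sv_lt ⟨a.val / 36, by omega⟩ ⟨a.val % 4, by omega⟩
  have hsb := aux_Sv_lt ⟨b.val / 36, by omega⟩ ⟨b.val % 4, by omega⟩
  simp only at hsa hsb
  have hs : Sv (a.val / 36) (a.val % 4) = Sv (b.val / 36) (b.val % 4) := by omega
  have ht : a.val / 36 = b.val / 36 := h3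
  have hk : (⟨a.val % 4, by omega⟩ : Fin 4) = ⟨b.val % 4, by omega⟩ := by
    apply aux_Sv_inj ⟨a.val / 36, by omega⟩
    simpa [ht] using hs
  have hk' : a.val % 4 = b.val % 4 := congrArg Fin.val hk
  have : a.val = b.val := by omega
  exact Fin.ext this

lemma aux_cnt123_le : ∀ a, cnt123 a = 0 ∨ cnt123 a = 1 := by
  intro a
  have h : cnt123 a ≤ 1 := by
    apply Finset.card_le_one.mpr
    intro x hx y hy
    simp only [Finset.mem_filter] at hx hy
    exact aux_Yinj (hx.2.trans hy.2.symm)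
  omega

lemma aux_cnt123_sum : ∑ a, cnt123 a = 216 := by
  have := Finset.card_eq_sum_card_fiberwise
    (f := fun ω : Fin 216 => (Y1 ω, Y2 ω, Y3 ω))
    (s := univ) (t := univ) (fun x _ => Finset.mem_univ _)
  simpa [cnt123] using this.symm

lemma aux_cnt123_supp :
    ((univ : Finset (Fin 9 × Fin 9 × Fin 6)).filter fun a => cnt123 a ≠ 0).card = 216 := by
  have h1 : ((univ : Finset (Fin 9 × Fin 9 × Fin 6)).filter fun a => cnt123 a ≠ 0).card
      = ∑ a ∈ (univ : Finset (Fin 9 × Fin 9 × Fin 6)).filter fun a => cnt123 a ≠ 0,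
          cnt123 a := by
    rw [Finset.card_eq_sum_ones]
    apply Finset.sum_congr rfl
    intro a ha
    have := aux_cnt123_le a
    simp only [Finset.mem_filter] at ha
    omega
  rw [h1, Finset.sum_filter_ne_zero, aux_cnt123_sum]

lemma aux_logb_zeta : Real.logb 2 zeta
    = (1/2) * Real.logb 2 54 + (1/4) * Real.logb 2 72
      + (1/6) * Real.logb 2 108 + (1/12) * Real.logb 2 216 := by
  unfold zeta
  rw [Real.logb, Real.log_mul (by positivity) (by positivity),
    Real.log_mul (by positivity) (by positivity),
    Real.log_mul (by positivity) (by positivity),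
    Real.log_rpow (by norm_num), Real.log_rpow (by norm_num),
    Real.log_rpow (by norm_num), Real.log_rpow (by norm_num)]
  simp only [Real.logb]
  ring

lemma aux_ent1 : ent (fun _ => (216:ℝ)⁻¹) Y1 = Real.logb 2 9 := by
  unfold ent
  have h : ∀ a : Fin 9, pr (fun _ => (216:ℝ)⁻¹) Y1 a = (9:ℝ)⁻¹ := by
    intro a; rw [aux_pr_unif, aux_cnt1]; norm_num
  simp only [h]
  rw [Finset.sum_const, card_univ, Fintype.card_fin, Real.logb_inv, nsmul_eq_mul]
  ring

lemma aux_ent2 : ent (fun _ => (216:ℝ)⁻¹) Y2 = Real.logb 2 9 := by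
  unfold ent
  have h : ∀ a : Fin 9, pr (fun _ => (216:ℝ)⁻¹) Y2 a = (9:ℝ)⁻¹ := by
    intro a; rw [aux_pr_unif, aux_cnt2]; norm_num
  simp only [h]
  rw [Finset.sum_const, card_univ, Fintype.card_fin, Real.logb_inv, nsmul_eq_mul]
  ring

lemma aux_ent3 : ent (fun _ => (216:ℝ)⁻¹) Y3 = Real.logb 2 6 := by
  unfold ent
  have h : ∀ a : Fin 6, pr (fun _ => (216:ℝ)⁻¹) Y3 a = (6:ℝ)⁻¹ := by
    intro a; rw [aux_pr_unif, aux_cnt3]; norm_num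
  simp only [h]
  rw [Finset.sum_const, card_univ, Fintype.card_fin, Real.logb_inv, nsmul_eq_mul]
  ring

lemma aux_ent13 : ent (fun _ => (216:ℝ)⁻¹) (fun ω => (Y1 ω, Y3 ω)) = Real.logb 2 54 := by
  unfold ent
  have h : ∀ a : Fin 9 × Fin 6,
      pr (fun _ => (216:ℝ)⁻¹) (fun ω => (Y1 ω, Y3 ω)) a = (54:ℝ)⁻¹ := by
    intro a; rw [aux_pr_unif, aux_cnt13]; norm_num
  simp only [h]
  rw [Finset.sum_const, card_univ, Fintype.card_prod, Fintype.card_fin, Fintype.card_fin,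
    Real.logb_inv, nsmul_eq_mul]
  push_cast
  ring

lemma aux_ent23 : ent (fun _ => (216:ℝ)⁻¹) (fun ω => (Y2 ω, Y3 ω)) = Real.logb 2 54 := by
  unfold ent
  have h : ∀ a : Fin 9 × Fin 6,
      pr (fun _ => (216:ℝ)⁻¹) (fun ω => (Y2 ω, Y3 ω)) a = (54:ℝ)⁻¹ := by
    intro a; rw [aux_pr_unif, aux_cnt23]; norm_num
  simp only [h]
  rw [Finset.sum_const, card_univ, Fintype.card_prod, Fintype.card_fin, Fintype.card_fin,
    Real.logb_inv, nsmul_eq_mul]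
  push_cast
  ring

lemma aux_ent12 :
    ent (fun _ => (216:ℝ)⁻¹) (fun ω => (Y1 ω, Y2 ω)) = Real.logb 2 zeta := by
  unfold ent
  have h : ∀ a : Fin 9 × Fin 9, pr (fun _ => (216:ℝ)⁻¹) (fun ω => (Y1 ω, Y2 ω)) a
      = ((Mf a.1 a.2 : ℝ)/216) := by
    intro a; rw [aux_pr_unif, aux_cnt12]
  simp only [h]
  have hc := Finset.sum_comp (s := (univ : Finset (Fin 9 × Fin 9)))
    (fun k : ℕ => ((k:ℝ)/216) * Real.logb 2 ((k:ℝ)/216)) (fun a => Mf a.1 a.2)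
  rw [hc, aux_img12]
  rw [Finset.sum_insert (by decide), Finset.sum_insert (by decide),
    Finset.sum_insert (by decide), Finset.sum_singleton, aux_f4, aux_f3, aux_f2, aux_f1]
  simp only [nsmul_eq_mul]
  rw [show ((4:ℕ):ℝ)/216 = (54:ℝ)⁻¹ by norm_num,
    show ((3:ℕ):ℝ)/216 = (72:ℝ)⁻¹ by norm_num,
    show ((2:ℕ):ℝ)/216 = (108:ℝ)⁻¹ by norm_num,
    show ((1:ℕ):ℝ)/216 = (216:ℝ)⁻¹ by norm_num,
    Real.logb_inv, Real.logb_inv, Real.logb_inv, Real.logb_inv, aux_logb_zeta]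
  push_cast
  ring

lemma aux_pr123 : ∀ x, pr (fun _ => (216:ℝ)⁻¹) (fun ω => (Y1 ω, Y2 ω, Y3 ω)) x
    = (cnt123 x : ℝ)/216 := by
  intro x; rw [aux_pr_unif]; rfl

lemma aux_ent123 :
    ent (fun _ => (216:ℝ)⁻¹) (fun ω => (Y1 ω, Y2 ω, Y3 ω)) = Real.logb 2 216 := by
  unfold ent
  simp only [aux_pr123]
  have h2 : ∀ a, ((cnt123 a : ℝ)/216) * Real.logb 2 ((cnt123 a : ℝ)/216)
      = (cnt123 a : ℝ) * ((216:ℝ)⁻¹ * Real.logb 2 (216:ℝ)⁻¹) := by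
    intro a
    rcases aux_cnt123_le a with h | h <;> rw [h]
    · push_cast; ring
    · push_cast
      rw [show (1:ℝ)/216 = (216:ℝ)⁻¹ by norm_num]
      ring
  simp only [h2]
  rw [← Finset.sum_mul, ← Nat.cast_sum, aux_cnt123_sum, Real.logb_inv]
  push_cast
  ring

/-- There are finite-alphabet random variables X₁, X₂ (on 9-element alphabets) and X₃
(on a 6-element alphabet) with joint distribution uniform on a support of exactly 216
triples, (X₁,X₃) and (X₂,X₃) uniform on all 54 pairs, X₁, X₂ uniform on 9 values, X₃
uniform on 6 values, and H(X₁,X₂) = log₂ ζ. Consequently g is an entropy vector. -/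

theorem stmt11 :
    (∃ (N : ℕ) (p : Fin N → ℝ) (X₁ X₂ : Fin N → Fin 9) (X₃ : Fin N → Fin 6),
      IsDist p ∧
      {x | pr p (fun ω => (X₁ ω, X₂ ω, X₃ ω)) x ≠ 0}.ncard = 216 ∧
      (∀ x, pr p (fun ω => (X₁ ω, X₂ ω, X₃ ω)) x = 0 ∨
            pr p (fun ω => (X₁ ω, X₂ ω, X₃ ω)) x = 1/216) ∧
      (∀ x, pr p (fun ω => (X₁ ω, X₃ ω)) x = 1/54) ∧
      (∀ x, pr p (fun ω => (X₂ ω, X₃ ω)) x = 1/54) ∧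
      (∀ a, pr p X₁ a = 1/9) ∧ (∀ a, pr p X₂ a = 1/9) ∧ (∀ a, pr p X₃ a = 1/6) ∧
      ent p (fun ω => (X₁ ω, X₂ ω)) = Real.logb 2 zeta ∧
      entVec3 p X₁ X₂ X₃ = g) ∧
    IsEntropic g := by
  have hdist : IsDist (fun _ : Fin 216 => (216:ℝ)⁻¹) := by
    constructor
    · intro ω; positivity
    · rw [Finset.sum_const, card_univ, Fintype.card_fin, nsmul_eq_mul]
      norm_num
  have hset : {x | pr (fun _ : Fin 216 => (216:ℝ)⁻¹) (fun ω => (Y1 ω, Y2 ω, Y3 ω)) x ≠ 0}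
      = ↑((univ : Finset (Fin 9 × Fin 9 × Fin 6)).filter fun a => cnt123 a ≠ 0) := by
    ext x
    simp only [Set.mem_setOf_eq, aux_pr123, Finset.coe_filter, mem_univ, true_and,
      ne_eq, div_eq_zero_iff, Nat.cast_eq_zero]
    norm_num
  have hncard : {x | pr (fun _ : Fin 216 => (216:ℝ)⁻¹)
      (fun ω => (Y1 ω, Y2 ω, Y3 ω)) x ≠ 0}.ncard = 216 := by
    rw [hset, Set.ncard_coe_finset, aux_cnt123_supp]
  have hvec : entVec3 (fun _ : Fin 216 => (216:ℝ)⁻¹) Y1 Y2 Y3 = g := by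
    funext x
    fin_cases x <;>
      simp [entVec3, g, aux_ent1, aux_ent2, aux_ent3, aux_ent12, aux_ent13, aux_ent23,
        aux_ent123]
  refine ⟨⟨216, fun _ => (216:ℝ)⁻¹, Y1, Y2, Y3, hdist, hncard, ?_, ?_, ?_, ?_, ?_, ?_,
      aux_ent12, hvec⟩, 216, 9, 9, 6, fun _ => (216:ℝ)⁻¹, Y1, Y2, Y3, hdist, hvec⟩
  · intro x
    rw [aux_pr123]
    rcases aux_cnt123_le x with h | h <;> rw [h]
    · left; norm_num
    · right; norm_num
  · intro x; rw [aux_pr_unif, aux_cnt13]; norm_num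
  · intro x; rw [aux_pr_unif, aux_cnt23]; norm_num
  · intro a; rw [aux_pr_unif, aux_cnt1]; norm_num
  · intro a; rw [aux_pr_unif, aux_cnt2]; norm_num
  · intro a; rw [aux_pr_unif, aux_cnt3]; norm_num
end

section
/- Let ζ = 54^{1/2} · 72^{1/4} · 108^{1/6} · 216^{1/12} and g = (log₂ 9, log₂ 9, log₂ 6, log₂ ζ, log₂ 54, log₂ 54, log₂ 216) ∈ ℝ^7. Then 36 < ζ < 81 < 216, and g = (log₂ 4)·e_1 + (log₂ 4)·e_2 + (log₂(216/ζ))·e_3 + (log₂(81/ζ))·e_{12} + (log₂(ζ/36))·e_{123'}, where all five coefficients are nonnegative; hence g is a nonnegative linear combination of e_1, e_2, e_3, e_{12}, e_{123'}. -/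
open Finset

lemma zeta_pos : 0 < zeta := by unfold zeta; positivity

lemma log54 : Real.log 54 = Real.log 2 + 3 * Real.log 3 := by
  rw [show (54:ℝ) = 2 * 3^3 by norm_num, Real.log_mul (by norm_num) (by norm_num),
    Real.log_pow]; push_cast; ring

lemma log72 : Real.log 72 = 3 * Real.log 2 + 2 * Real.log 3 := by
  rw [show (72:ℝ) = 2^3 * 3^2 by norm_num, Real.log_mul (by norm_num) (by norm_num),
    Real.log_pow, Real.log_pow]; push_cast; ring

lemma log108 : Real.log 108 = 2 * Real.log 2 + 3 * Real.log 3 := by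
  rw [show (108:ℝ) = 2^2 * 3^3 by norm_num, Real.log_mul (by norm_num) (by norm_num),
    Real.log_pow, Real.log_pow]; push_cast; ring

lemma log216 : Real.log 216 = 3 * Real.log 2 + 3 * Real.log 3 := by
  rw [show (216:ℝ) = 2^3 * 3^3 by norm_num, Real.log_mul (by norm_num) (by norm_num),
    Real.log_pow, Real.log_pow]; push_cast; ring

lemma log9 : Real.log 9 = 2 * Real.log 3 := by
  rw [show (9:ℝ) = 3^2 by norm_num, Real.log_pow]; push_cast; ring

lemma log6 : Real.log 6 = Real.log 2 + Real.log 3 := by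
  rw [show (6:ℝ) = 2 * 3 by norm_num, Real.log_mul (by norm_num) (by norm_num)]

lemma log4 : Real.log 4 = 2 * Real.log 2 := by
  rw [show (4:ℝ) = 2^2 by norm_num, Real.log_pow]; push_cast; ring

lemma log36 : Real.log 36 = 2 * Real.log 2 + 2 * Real.log 3 := by
  rw [show (36:ℝ) = 2^2 * 3^2 by norm_num, Real.log_mul (by norm_num) (by norm_num),
    Real.log_pow, Real.log_pow]; push_cast; ring

lemma log81 : Real.log 81 = 4 * Real.log 3 := by
  rw [show (81:ℝ) = 3^4 by norm_num, Real.log_pow]; push_cast; ring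

lemma logzeta : Real.log zeta = 11/6 * Real.log 2 + 11/4 * Real.log 3 := by
  unfold zeta
  rw [Real.log_mul (by positivity) (by positivity),
    Real.log_mul (by positivity) (by positivity),
    Real.log_mul (by positivity) (by positivity),
    Real.log_rpow (by norm_num), Real.log_rpow (by norm_num),
    Real.log_rpow (by norm_num), Real.log_rpow (by norm_num),
    log54, log72, log108, log216]
  ring

lemma keyA : 2 * Real.log 2 < 9 * Real.log 3 := by
  have := Real.log_lt_log (by norm_num : (0:ℝ) < 2^2) (by norm_num : (2:ℝ)^2 < 3^9)
  rw [Real.log_pow, Real.log_pow] at this; push_cast at this; linarith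

lemma keyB : 22 * Real.log 2 < 15 * Real.log 3 := by
  have := Real.log_lt_log (by norm_num : (0:ℝ) < 2^22) (by norm_num : (2:ℝ)^22 < 3^15)
  rw [Real.log_pow, Real.log_pow] at this; push_cast at this; linarith

lemma zeta_gt : (36:ℝ) < zeta := by
  rw [← Real.exp_log (by norm_num : (0:ℝ) < 36), ← Real.exp_log zeta_pos]
  exact Real.exp_lt_exp.mpr (by rw [logzeta, log36]; linarith [keyA])

lemma zeta_lt : zeta < 81 := by
  rw [← Real.exp_log (by norm_num : (0:ℝ) < 81), ← Real.exp_log zeta_pos]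
  exact Real.exp_lt_exp.mpr (by rw [logzeta, log81]; linarith [keyB])

/-- 36 < ζ < 81 < 216, and g is the nonnegative combination
(log₂4)e₁+(log₂4)e₂+(log₂(216/ζ))e₃+(log₂(81/ζ))e₁₂+(log₂(ζ/36))e₁₂₃'. -/
theorem stmt12 :
    (36:ℝ) < zeta ∧ zeta < 81 ∧ (81:ℝ) < 216 ∧
    0 ≤ Real.logb 2 4 ∧ 0 ≤ Real.logb 2 (216/zeta) ∧
    0 ≤ Real.logb 2 (81/zeta) ∧ 0 ≤ Real.logb 2 (zeta/36) ∧
    g = Real.logb 2 4 • e1 + Real.logb 2 4 • e2 + Real.logb 2 (216/zeta) • e3 +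
        Real.logb 2 (81/zeta) • e12 + Real.logb 2 (zeta/36) • e123' :=  by
  have hzp := zeta_pos
  have hz36 := zeta_gt
  have hz81 := zeta_lt
  have h2 : (0:ℝ) < Real.log 2 := Real.log_pos (by norm_num)
  refine ⟨hz36, hz81, by norm_num, ?_, ?_, ?_, ?_, ?_⟩
  · exact Real.logb_nonneg (by norm_num) (by norm_num)
  · exact Real.logb_nonneg (by norm_num) ((one_le_div hzp).mpr (by linarith))
  · exact Real.logb_nonneg (by norm_num) ((one_le_div hzp).mpr (by linarith))
  · exact Real.logb_nonneg (by norm_num) ((one_le_div (by norm_num : (0:ℝ) < 36)).mpr (by linarith))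
  · funext i
    fin_cases i <;>
      simp only [g, e1, e2, e3, e12, e123', Pi.add_apply, Pi.smul_apply, smul_eq_mul,
        Matrix.cons_val_zero, Matrix.cons_val_one, Matrix.head_cons, Matrix.cons_val_two,
        Matrix.tail_cons, Matrix.cons_val_three, Matrix.cons_val_four, Matrix.cons_val_fin_one,
        Matrix.cons_val', Matrix.cons_val_succ, Real.logb, Fin.reduceFinMk, Matrix.cons_val,
        Real.log_div (by norm_num : (216:ℝ) ≠ 0) hzp.ne',
        Real.log_div (by norm_num : (81:ℝ) ≠ 0) hzp.ne',
        Real.log_div hzp.ne' (by norm_num : (36:ℝ) ≠ 0),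
        logzeta, log9, log6, log54, log216, log4, log36, log81] <;>
      field_simp <;> ring
end

section
/- Let ζ = 54^{1/2} · 72^{1/4} · 108^{1/6} · 216^{1/12} and g = (log₂ 9, log₂ 9, log₂ 6, log₂ ζ, log₂ 54, log₂ 54, log₂ 216) ∈ ℝ^7. Then g cannot be written as a nonnegative linear combination of any proper subset of {e_1, e_2, e_3, e_{12}, e_{123'}}; in particular g is not a nonnegative linear combination of e_1, e_2, e_3, e_{123'} alone (it violates h_1 + h_2 = h_{12}). -/
open Finset

lemma tlarge : (22:ℝ)/15 < Real.logb 2 3 := by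
  rw [Real.lt_logb_iff_rpow_lt (by norm_num) (by norm_num)]
  by_contra h
  push_neg at h
  have h2 : (3:ℝ)^(15:ℕ) ≤ ((2:ℝ) ^ ((22:ℝ)/15))^(15:ℕ) :=
    pow_le_pow_left₀ (by norm_num) h 15
  rw [← Real.rpow_natCast ((2:ℝ) ^ ((22:ℝ)/15)) 15, ← Real.rpow_mul (by norm_num)] at h2
  norm_num at h2

lemma l9 : Real.logb 2 9 = 2 * Real.logb 2 3 := by
  rw [show (9:ℝ) = 3^(2:ℕ) by norm_num, Real.logb_pow]; norm_num

lemma l6 : Real.logb 2 6 = 1 + Real.logb 2 3 := by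
  rw [show (6:ℝ) = 2*3 by norm_num, Real.logb_mul (by norm_num) (by norm_num),
    Real.logb_self_eq_one (by norm_num)]

lemma l54 : Real.logb 2 54 = 1 + 3 * Real.logb 2 3 := by
  rw [show (54:ℝ) = 2*3^(3:ℕ) by norm_num, Real.logb_mul (by norm_num) (by norm_num),
    Real.logb_self_eq_one (by norm_num), Real.logb_pow]; norm_num

lemma l72 : Real.logb 2 72 = 3 + 2 * Real.logb 2 3 := by
  rw [show (72:ℝ) = 2^(3:ℕ)*3^(2:ℕ) by norm_num, Real.logb_mul (by norm_num) (by norm_num),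
    Real.logb_pow, Real.logb_pow, Real.logb_self_eq_one (by norm_num)]; norm_num

lemma l108 : Real.logb 2 108 = 2 + 3 * Real.logb 2 3 := by
  rw [show (108:ℝ) = 2^(2:ℕ)*3^(3:ℕ) by norm_num, Real.logb_mul (by norm_num) (by norm_num),
    Real.logb_pow, Real.logb_pow, Real.logb_self_eq_one (by norm_num)]; norm_num

lemma l216 : Real.logb 2 216 = 3 + 3 * Real.logb 2 3 := by
  rw [show (216:ℝ) = 2^(3:ℕ)*3^(3:ℕ) by norm_num, Real.logb_mul (by norm_num) (by norm_num),
    Real.logb_pow, Real.logb_pow, Real.logb_self_eq_one (by norm_num)]; norm_num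

lemma lzeta : Real.logb 2 zeta = 11/6 + 11/4 * Real.logb 2 3 := by
  unfold zeta
  rw [Real.logb_mul (by positivity) (by positivity),
      Real.logb_mul (by positivity) (by positivity),
      Real.logb_mul (by positivity) (by positivity),
      Real.logb_rpow_eq_mul_logb_of_pos (by norm_num),
      Real.logb_rpow_eq_mul_logb_of_pos (by norm_num),
      Real.logb_rpow_eq_mul_logb_of_pos (by norm_num),
      Real.logb_rpow_eq_mul_logb_of_pos (by norm_num),
      l54, l72, l108, l216]
  ring

/-- g is not a nonnegative combination of any proper subset of {e₁,e₂,e₃,e₁₂,e₁₂₃'}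
(equivalently, every nonnegative representation has all five coefficients nonzero);
in particular it is not a nonnegative combination of e₁,e₂,e₃,e₁₂₃' alone, as it
violates h₁ + h₂ = h₁₂. -/
theorem stmt13 :
    (∀ c1 c2 c3 c12 c123 : ℝ, 0 ≤ c1 → 0 ≤ c2 → 0 ≤ c3 → 0 ≤ c12 → 0 ≤ c123 →
      g = c1 • e1 + c2 • e2 + c3 • e3 + c12 • e12 + c123 • e123' →
      c1 ≠ 0 ∧ c2 ≠ 0 ∧ c3 ≠ 0 ∧ c12 ≠ 0 ∧ c123 ≠ 0) ∧
    (¬∃ c1 c2 c3 c4 : ℝ, 0 ≤ c1 ∧ 0 ≤ c2 ∧ 0 ≤ c3 ∧ 0 ≤ c4 ∧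
      g = c1 • e1 + c2 • e2 + c3 • e3 + c4 • e123') ∧
    g 0 + g 1 ≠ g 3 := by
  have htl := tlarge
  refine ⟨?_, ?_, ?_⟩
  · intro c1 c2 c3 c12 c123 _ _ _ _ _ hg
    have h0 := congrFun hg 0
    have h1 := congrFun hg 1
    have h2 := congrFun hg 2
    have h3 := congrFun hg 3
    have h4 := congrFun hg 4
    have h5 := congrFun hg 5
    have h6 := congrFun hg 6
    simp [g, e1, e2, e3, e12, e123', l9, l6, l54, l216, lzeta,
      show (5:Fin 7) = Fin.succ 4 from rfl, show (6:Fin 7) = Fin.succ 5 from rfl,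
      show (5:Fin 6) = Fin.succ 4 from rfl, Matrix.cons_val_succ] at h0 h1 h2 h3 h4 h5 h6
    have p1 : 0 < c1 := by linarith
    have p2 : 0 < c2 := by linarith
    have p3 : 0 < c3 := by linarith
    have p4 : 0 < c12 := by linarith
    have p5 : 0 < c123 := by linarith
    exact ⟨p1.ne', p2.ne', p3.ne', p4.ne', p5.ne'⟩
  · rintro ⟨c1, c2, c3, c4, _, _, _, _, hg⟩
    have h0 := congrFun hg 0
    have h1 := congrFun hg 1
    have h3 := congrFun hg 3
    simp [g, e1, e2, e3, e123', l9, lzeta] at h0 h1 h3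
    linarith
  · simp [g, l9, lzeta]
    intro h
    linarith
end

section
/- Let ζ = 54^{1/2} · 72^{1/4} · 108^{1/6} · 216^{1/12} and g = (log₂ 9, log₂ 9, log₂ 6, log₂ ζ, log₂ 54, log₂ 54, log₂ 216) ∈ ℝ^7. There do not exist λ_1, λ_2, λ_3, λ_{12}, λ_{123'} ≥ 0 with g = λ_1·e_1 + λ_2·e_2 + λ_3·e_3 + λ_{12}·e_{12} + λ_{123'}·e_{123'} satisfying either λ_{12} + λ_{123'} ≥ log₂ ⌈2^{λ_{123'}}⌉ or λ_{123'} = log₂ m for some positive integer m. (Indeed the unique representation has λ_{123'} = log₂(ζ/36) with 2 < ζ/36 < 3 and ζ/36 not an integer, and λ_{12} + λ_{123'} = log₂(9/4) < log₂ 3 = log₂ ⌈2^{λ_{123'}}⌉.) -/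
open Finset

/-- There is no nonnegative representation of g in e₁,e₂,e₃,e₁₂,e₁₂₃' satisfying
either λ₁₂+λ₁₂₃' ≥ log₂⌈2^{λ₁₂₃'}⌉ or λ₁₂₃' = log₂ m for a positive integer m. -/
theorem stmt14 :
    ¬∃ l1 l2 l3 l12 l : ℝ, 0 ≤ l1 ∧ 0 ≤ l2 ∧ 0 ≤ l3 ∧ 0 ≤ l12 ∧ 0 ≤ l ∧
      g = l1 • e1 + l2 • e2 + l3 • e3 + l12 • e12 + l • e123' ∧
      (l12 + l ≥ Real.logb 2 ((⌈(2:ℝ) ^ l⌉ : ℤ) : ℝ) ∨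
       ∃ m : ℕ, 0 < m ∧ l = Real.logb 2 (m : ℝ)) := by

  rintro ⟨l1, l2, l3, l12, l, hl1n, hl2n, hl3n, hl12n, hln, heq, hdisj⟩
  set t := Real.logb 2 3 with ht
  have l2pos : (0:ℝ) < Real.log 2 := Real.log_pos (by norm_num)
  have ht2 : Real.logb 2 2 = 1 := by
    unfold Real.logb; exact div_self (ne_of_gt l2pos)
  have h9 : Real.logb 2 9 = 2 * t := by
    rw [show (9:ℝ) = 3 ^ (2:ℕ) by norm_num, Real.logb_pow]; norm_num; exact ht.symm
  have h54 : Real.logb 2 54 = 1 + 3 * t := by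
    rw [show (54:ℝ) = 2 * 3 ^ (3:ℕ) by norm_num,
      Real.logb_mul (by norm_num) (by norm_num), Real.logb_pow, ht2]; norm_num; exact ht.symm
  have h72 : Real.logb 2 72 = 3 + 2 * t := by
    rw [show (72:ℝ) = 2 ^ (3:ℕ) * 3 ^ (2:ℕ) by norm_num,
      Real.logb_mul (by norm_num) (by norm_num), Real.logb_pow, Real.logb_pow, ht2]; norm_num; exact ht.symm
  have h108 : Real.logb 2 108 = 2 + 3 * t := by
    rw [show (108:ℝ) = 2 ^ (2:ℕ) * 3 ^ (3:ℕ) by norm_num,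
      Real.logb_mul (by norm_num) (by norm_num), Real.logb_pow, Real.logb_pow, ht2]; norm_num; exact ht.symm
  have h216 : Real.logb 2 216 = 3 + 3 * t := by
    rw [show (216:ℝ) = 2 ^ (3:ℕ) * 3 ^ (3:ℕ) by norm_num,
      Real.logb_mul (by norm_num) (by norm_num), Real.logb_pow, Real.logb_pow, ht2]; norm_num; exact ht.symm
  have hz : Real.logb 2 zeta = 11/6 + 11/4 * t := by
    unfold zeta
    rw [Real.logb_mul (by positivity) (by positivity),
      Real.logb_mul (by positivity) (by positivity),
      Real.logb_mul (by positivity) (by positivity),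
      Real.logb_rpow_eq_mul_logb_of_pos (by norm_num),
      Real.logb_rpow_eq_mul_logb_of_pos (by norm_num),
      Real.logb_rpow_eq_mul_logb_of_pos (by norm_num),
      Real.logb_rpow_eq_mul_logb_of_pos (by norm_num),
      h54, h72, h108, h216]
    ring
  -- component equations
  have h0 := congrFun heq 0
  have h3 := congrFun heq 3
  have h4 := congrFun heq ((3:Fin 6).succ)
  have h5 := congrFun heq ((4:Fin 6).succ)
  have h6 := congrFun heq ((4:Fin 5).succ.succ)
  simp [g, e1, e2, e3, e12, e123', Matrix.cons_val_zero, Matrix.cons_val_one,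
    Matrix.cons_val_succ] at h0 h3 h4 h5 h6
  rw [h9] at h0
  rw [hz] at h3
  rw [h54] at h4 h5
  rw [h216] at h6
  -- solve the linear system
  have hL1 : l1 = 2 := by linarith
  have hL2 : l2 = 2 := by linarith
  have hl : l = -1/6 + 3/4 * t := by linarith
  have hsum : l12 + l = 2 * t - 2 := by linarith
  -- bounds on t
  have ht_lt2 : t < 2 := by
    have : (3:ℝ) < 2 ^ (2:ℝ) := by
      rw [show ((2:ℝ):ℝ) = ((2:ℕ):ℝ) by norm_num, Real.rpow_natCast]; norm_num
    calc t < Real.logb 2 (2 ^ (2:ℝ)) := by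
            apply Real.logb_lt_logb (by norm_num) (by norm_num) this
      _ = 2 := Real.logb_rpow (by norm_num) (by norm_num)
  have ht_gt : 14/9 < t := by
    have hpow : ((2:ℝ) ^ ((14:ℝ)/9)) ^ (9:ℕ) < 3 ^ (9:ℕ) := by
      rw [← Real.rpow_natCast ((2:ℝ) ^ ((14:ℝ)/9)) 9, ← Real.rpow_mul (by norm_num)]
      rw [show (14:ℝ)/9 * (9:ℕ) = ((14:ℕ):ℝ) by push_cast; ring, Real.rpow_natCast]
      norm_num
    have h23 : (2:ℝ) ^ ((14:ℝ)/9) < 3 := lt_of_pow_lt_pow_left₀ 9 (by norm_num) hpow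
    calc (14:ℝ)/9 = Real.logb 2 (2 ^ ((14:ℝ)/9)) := (Real.logb_rpow (by norm_num) (by norm_num)).symm
      _ < t := Real.logb_lt_logb (by norm_num) (by positivity) h23
  have hl_gt1 : 1 < l := by rw [hl]; linarith
  have hl_ltt : l < t := by
    rw [hl]; nlinarith [Real.logb_pos (by norm_num : (1:ℝ) < 2) (by norm_num : (1:ℝ) < 3)]
  -- bounds on 2^l
  have h2l_lo : (2:ℝ) < 2 ^ l := by
    calc (2:ℝ) = 2 ^ (1:ℝ) := (Real.rpow_one 2).symm
      _ < 2 ^ l := Real.rpow_lt_rpow_of_exponent_lt (by norm_num) hl_gt1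
  have h2l_hi : (2:ℝ) ^ l < 3 := by
    calc (2:ℝ) ^ l < 2 ^ t := Real.rpow_lt_rpow_of_exponent_lt (by norm_num) hl_ltt
      _ = 3 := Real.rpow_logb (by norm_num) (by norm_num) (by norm_num)
  rcases hdisj with hge | ⟨m, hmpos, hlm⟩
  · have hceil : ⌈(2:ℝ) ^ l⌉ = 3 := by
      rw [Int.ceil_eq_iff]
      constructor
      · push_cast; linarith
      · push_cast; linarith
    rw [hceil] at hge
    have : Real.logb 2 (((3:ℤ):ℝ)) = t := by norm_num; exact ht.symm
    rw [this] at hge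
    linarith
  · have hm2 : (2:ℝ) ^ l = (m:ℝ) := by
      rw [hlm]
      exact Real.rpow_logb (by norm_num) (by norm_num) (by exact_mod_cast hmpos)
    rw [hm2] at h2l_lo h2l_hi
    have h1 : 2 < m := by exact_mod_cast h2l_lo
    have h2 : m < 3 := by exact_mod_cast h2l_hi
    omega
end

section
/- The polyhedral cone Γ_3 ⊆ ℝ^7, defined as the set of vectors h = (h_1, h_2, h_3, h_{12}, h_{13}, h_{23}, h_{123}) satisfying the elemental inequalities h_{123} ≥ h_{12}, h_{123} ≥ h_{13}, h_{123} ≥ h_{23}, and h_{iβ} + h_{jβ} ≥ h_β + h_{ijβ} for all distinct i, j ∈ {1,2,3} and β ⊆ {1,2,3}∖{i,j} (with h_∅ = 0), equals the conic hull of the eight vectors e_1 = (1,0,0,1,1,0,1), e_2 = (0,1,0,1,0,1,1), e_3 = (0,0,1,0,1,1,1), e_{12} = (1,1,0,1,1,1,1), e_{13} = (1,0,1,1,1,1,1), e_{23} = (0,1,1,1,1,1,1), e_{123} = (1,1,1,1,1,1,1), e_{123'} = (1,1,1,2,2,2,2), i.e., the set of all nonnegative linear combinations of these eight vectors. -/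
open Finset

/-- The polymatroid cone Γ₃ ⊆ ℝ⁷: vectors h = (h₁,h₂,h₃,h₁₂,h₁₃,h₂₃,h₁₂₃) (indexed
0,…,6) satisfying all the elemental inequalities (with h_∅ = 0). -/
def Gamma3 : Set (Fin 7 → ℝ) :=
  {h | h 6 ≥ h 3 ∧ h 6 ≥ h 4 ∧ h 6 ≥ h 5 ∧
       h 0 + h 1 ≥ 0 + h 3 ∧ h 0 + h 2 ≥ 0 + h 4 ∧ h 1 + h 2 ≥ 0 + h 5 ∧
       h 4 + h 5 ≥ h 2 + h 6 ∧ h 3 + h 5 ≥ h 1 + h 6 ∧ h 3 + h 4 ≥ h 0 + h 6}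

@[simp] lemma vec8_five (a b c d e f g k : ℝ) : ![a,b,c,d,e,f,g,k] 5 = f := rfl
@[simp] lemma vec8_six (a b c d e f g k : ℝ) : ![a,b,c,d,e,f,g,k] 6 = g := rfl
@[simp] lemma vec8_seven (a b c d e f g k : ℝ) : ![a,b,c,d,e,f,g,k] 7 = k := rfl
@[simp] lemma vec7_five (a b c d e f g : ℝ) : ![a,b,c,d,e,f,g] 5 = f := rfl
@[simp] lemma vec7_six (a b c d e f g : ℝ) : ![a,b,c,d,e,f,g] 6 = g := rfl

set_option maxHeartbeats 1000000 in
/-- Γ₃ equals the conic hull of the eight extreme-ray generators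
e₁, e₂, e₃, e₁₂, e₁₃, e₂₃, e₁₂₃, e₁₂₃'. -/
theorem stmt18 :
    Gamma3 = {h : Fin 7 → ℝ | ∃ c : Fin 8 → ℝ, (∀ k, 0 ≤ c k) ∧
      h = c 0 • e1 + c 1 • e2 + c 2 • e3 + c 3 • e12 + c 4 • e13 + c 5 • e23 +
          c 6 • e123 + c 7 • e123'} := by
  ext h
  simp only [Gamma3, Set.mem_setOf_eq]
  constructor
  · rintro ⟨g1, g2, g3, g4, g5, g6, g7, g8, g9⟩
    rcases le_or_gt 0 (h 0 + h 1 + h 2 + h 6 - h 3 - h 4 - h 5) with hd | hd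
    · refine ⟨![h 6 - h 5, h 6 - h 4, h 6 - h 3,
        h 4 + h 5 - h 2 - h 6, h 3 + h 5 - h 1 - h 6, h 3 + h 4 - h 0 - h 6,
        h 0 + h 1 + h 2 + h 6 - h 3 - h 4 - h 5, 0], ?_, ?_⟩
      · intro k; fin_cases k <;> simp [Matrix.cons_val_succ] <;> linarith
      · funext i
        fin_cases i <;>
          simp [e1, e2, e3, e12, e13, e23, e123, e123', Matrix.cons_val_succ] <;> ring_nf <;> linarith
    · refine ⟨![h 6 - h 5, h 6 - h 4, h 6 - h 3,
        h 0 + h 1 - h 3, h 0 + h 2 - h 4, h 1 + h 2 - h 5,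
        0, h 3 + h 4 + h 5 - h 0 - h 1 - h 2 - h 6], ?_, ?_⟩
      · intro k; fin_cases k <;> simp [Matrix.cons_val_succ] <;> linarith
      · funext i
        fin_cases i <;>
          simp [e1, e2, e3, e12, e13, e23, e123, e123', Matrix.cons_val_succ] <;> ring_nf <;> linarith
  · rintro ⟨c, hc, rfl⟩
    have h0 := hc 0; have h1 := hc 1; have h2 := hc 2; have h3 := hc 3
    have h4 := hc 4; have h5 := hc 5; have h6 := hc 6; have h7 := hc 7
    refine ⟨?_, ?_, ?_, ?_, ?_, ?_, ?_, ?_, ?_⟩ <;>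
      simp [e1, e2, e3, e12, e13, e23, e123, e123', Matrix.cons_val_succ] <;> linarith
end
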